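/- arXiv:2501.04162 — 8 statements merged into one kernel-verified Lean document; each statement's English description precedes it below -/
import Mathlib

section
/- Let $p \ge 5$ be a prime and $r \ge 1$ an integer. Let $\Delta$ be a cyclic group of order $p^r$ with generator $\delta$, let $\Lambda = \mathbb{Z}_p[\Delta]$ be the group algebra, let $\iota$ be the ring automorphism of $\Lambda$ induced by $g \mapsto g^{-1}$ on $\Delta$, and let $\Lambda^+$ be the subring of $\Lambda$ fixed by $\iota$. Then there exists a distinguished polynomial $\Psi \in \mathbb{Z}_p[X]$ of degree $(p^r-1)/2$ with $v_p(\Psi(0)) = r$ such that the $\mathbb{Z}_p$-algebra homomorphism $\mathbb{Z}_p[X]/(X\,\Psi(X)) \to \Lambda^+$ sending $X$ to $[\delta] + [\delta^{-1}] - 2$ is a ring isomorphism. -/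
open Polynomial

private noncomputable def PP : ℕ → Polynomial ℤ
  | 0 => 1
  | 1 => X + 3
  | (k+2) => (X + 2) * PP (k+1) - PP k


private lemma two_step (Q : ℕ → Prop) (h0 : Q 0) (h1 : Q 1)
    (h : ∀ k, Q k → Q (k+1) → Q (k+2)) : ∀ k, Q k
  | 0 => h0
  | 1 => h1
  | (k+2) => h k (two_step Q h0 h1 h k) (two_step Q h0 h1 h (k+1))


private lemma X_add_two_monic : (X + 2 : Polynomial ℤ).Monic := by
  simpa using monic_X_add_C (2:ℤ)


private lemma PP_monic_deg : ∀ k, (PP k).Monic ∧ (PP k).natDegree = k := by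
  refine two_step _ ⟨monic_one, natDegree_one⟩
    ⟨by simpa [PP] using monic_X_add_C (3:ℤ), by simpa [PP] using natDegree_X_add_C (3:ℤ)⟩ ?_
  rintro k ⟨hm, hd⟩ ⟨hm', hd'⟩
  have hXm : ((X + 2) * PP (k+1) : Polynomial ℤ).Monic := X_add_two_monic.mul hm'
  have hXd : ((X + 2) * PP (k+1) : Polynomial ℤ).natDegree = k + 2 := by
    have hdeg2 : (X + 2 : Polynomial ℤ).natDegree = 1 := by
      simpa using natDegree_X_add_C (2:ℤ)
    rw [X_add_two_monic.natDegree_mul hm', hd', hdeg2]; omega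
  have hlt : (PP k).natDegree < ((X + 2) * PP (k+1) : Polynomial ℤ).natDegree := by
    rw [hXd, hd]; omega
  constructor
  · show ((X + 2) * PP (k+1) - PP k).Monic
    rw [sub_eq_add_neg]
    exact hXm.add_of_left (by
      rw [degree_neg]
      exact degree_lt_degree hlt)
  · show ((X + 2) * PP (k+1) - PP k).natDegree = k + 2
    rw [natDegree_sub_eq_left_of_natDegree_lt hlt, hXd]


private lemma PP_coeff_zero : ∀ k, (PP k).coeff 0 = 2*(k:ℤ)+1 := by
  refine two_step _ (by simp [PP]) (by simp [PP]) ?_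
  intro k h1 h2
  show ((X + 2) * PP (k+1) - PP k).coeff 0 = _
  rw [coeff_sub, mul_coeff_zero, h1, h2]
  simp
  ring

private lemma L1 {A : Type} [CommRing A] (x y : A) (hxy : x * y = 1) :
    ∀ k, (x - 1) * x ^ k * (((PP k).map (Int.castRingHom A)).eval (x + y - 2)) = x ^ (2*k+1) - 1 := by
  refine two_step _ ?_ ?_ ?_
  · simp [PP]
  · show (x - 1) * x ^ 1 * (((X + 3 : Polynomial ℤ).map (Int.castRingHom A)).eval (x + y - 2)) = _
    simp only [Polynomial.map_add, Polynomial.map_ofNat, map_X, eval_add, eval_X, eval_ofNat]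
    linear_combination (x - 1) * hxy
  · intro k h1 h2
    show (x - 1) * x ^ (k+2) *
      ((((X + 2) * PP (k+1) - PP k : Polynomial ℤ).map (Int.castRingHom A)).eval (x + y - 2)) = _
    simp only [Polynomial.map_sub, Polynomial.map_mul, Polynomial.map_add, Polynomial.map_ofNat,
      map_X, eval_sub, eval_mul, eval_add, eval_X, eval_ofNat]
    linear_combination (x*(x+y)) * h2 - x^2 * h1 + (x^(2*k+3) - 1) * hxy

private lemma L2 {R : Type} [CommRing R] (d : ℕ) (c : ℕ → R)
    (h : ∑ j ∈ Finset.range (d+1), C (c j) * (X - 1)^(2*j) * X^(d-j) = 0) :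
    ∀ j ≤ d, c j = 0 := by
  have h2 : ∑ j ∈ Finset.range (d+1), (C (c j) * (X + 1)^(d-j)) * X^(2*j) = 0 := by
    have := congrArg (aeval (X + 1 : Polynomial R)) h
    simp only [map_sum, map_mul, map_pow, map_sub, map_add, aeval_X, aeval_C, aeval_one,
      map_zero] at this
    calc ∑ j ∈ Finset.range (d+1), (C (c j) * (X + 1)^(d-j)) * X^(2*j)
        = ∑ j ∈ Finset.range (d+1),
            (algebraMap R (Polynomial R)) (c j) * (X + 1 - 1)^(2*j) * (X + 1)^(d-j) := by
          refine Finset.sum_congr rfl fun j _ => ?_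
          rw [add_sub_cancel_right]
          simp [algebraMap_eq]
          ring
      _ = 0 := this
  have key : ∀ j₀, j₀ ≤ d → (∀ i, i < j₀ → c i = 0) → c j₀ = 0 := by
    intro j₀ hj₀ ih
    have hc := congrArg (fun q => Polynomial.coeff q (2*j₀)) h2
    simp only [finset_sum_coeff, coeff_zero] at hc
    rw [Finset.sum_eq_single j₀] at hc
    · rw [coeff_mul_X_pow'] at hc
      simp only [le_refl, if_true, Nat.sub_self, coeff_C_mul] at hc
      rw [coeff_zero_eq_eval_zero] at hc
      simpa using hc
    · intro b hb hbne
      rcases lt_or_gt_of_ne hbne with hlt | hgt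
      · rw [ih b hlt]; simp
      · rw [coeff_mul_X_pow']
        have : ¬ (2*b ≤ 2*j₀) := by omega
        simp [this]
    · intro hmem
      exact absurd (Finset.mem_range.mpr (by omega)) hmem
  intro j hj
  induction j using Nat.strong_induction_on with
  | _ j IH => exact key j hj (fun i hi => IH i hi (le_trans hi.le hj))

private lemma aeval_int_map {R B : Type} [CommRing R] [CommRing B] [Algebra R B]
    (z : B) (q : Polynomial ℤ) :
    aeval z (q.map (Int.castRingHom R)) = (q.map (Int.castRingHom B)).eval z := by
  rw [aeval_def, eval₂_eq_eval_map, Polynomial.map_map]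
  congr 2
  exact Subsingleton.elim _ _

private lemma L3 {R : Type} [CommRing R] {Δ : Type} [CommGroup Δ] [Fintype Δ]
    (δ : Δ) (n : ℕ) (horder : orderOf δ = n)
    (w : Polynomial R) (hw : w.natDegree < n)
    (h : aeval (MonoidAlgebra.of R Δ δ) w = 0) : w = 0 := by
  have hs : (aeval (MonoidAlgebra.of R Δ δ) w : MonoidAlgebra R Δ)
      = ∑ i ∈ Finset.range n, MonoidAlgebra.single (δ^i) (w.coeff i) := by
    rw [aeval_eq_sum_range' hw]
    refine Finset.sum_congr rfl fun i _ => ?_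
    rw [← map_pow, MonoidAlgebra.of_apply]
    rw [MonoidAlgebra.smul_single]
    simp
  rw [hs] at h
  have h' : (∑ i ∈ Finset.range n, Finsupp.single (δ^i) (w.coeff i)) = (0 : Δ →₀ R) := by
    have := congrArg MonoidAlgebra.coeff h
    rw [MonoidAlgebra.coeff_sum] at this
    simpa only [MonoidAlgebra.coeff_single, MonoidAlgebra.coeff_zero] using this
  ext a
  rcases lt_or_ge a n with ha | ha
  · have happ := DFunLike.congr_fun h' (δ ^ a)
    rw [Finsupp.finset_sum_apply] at happ
    simp only [Finsupp.single_apply, Finsupp.coe_zero, Pi.zero_apply] at happ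
    rw [Finset.sum_eq_single a] at happ
    · simpa using happ
    · intro b hb hbne
      have : ¬ (δ ^ b = δ ^ a) := fun hexp => hbne
        (pow_injOn_Iio_orderOf (by simpa [horder] using Finset.mem_range.mp hb)
          (by simpa [horder] using ha) hexp)
      simp [this]
    · intro hmem
      exact absurd (Finset.mem_range.mpr ha) hmem
  · simp [coeff_eq_zero_of_natDegree_lt (lt_of_lt_of_le hw ha)]

private lemma Ldist (p : ℕ) [Fact p.Prime] (r m : ℕ) (hn2 : 2*m+1 = p^r) :
    ((PP m).map (Int.castRingHom (ZMod p))) = X^m := by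
  set K := RatFunc (ZMod p) with hK
  haveI : CharP K p := charP_of_injective_algebraMap (algebraMap (ZMod p) K).injective p
  set x : K := algebraMap (Polynomial (ZMod p)) K X with hx
  have hxne : x ≠ 0 := RatFunc.algebraMap_ne_zero X_ne_zero
  have hx1ne : x - 1 ≠ 0 := by
    have h0 : (X - 1 : Polynomial (ZMod p)) ≠ 0 := by
      simpa using X_sub_C_ne_zero (1 : ZMod p)
    have := RatFunc.algebraMap_ne_zero h0
    rw [map_sub, map_one] at this
    exact this
  have hxy : x * x⁻¹ = 1 := mul_inv_cancel₀ hxne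
  set t : K := x + x⁻¹ - 2 with ht
  have h1 := L1 x x⁻¹ hxy m
  rw [hn2, ← ht] at h1
  have hfrob : x ^ (p^r) - (1:K) = (x - 1) ^ (p^r) := by
    rw [sub_pow_char_pow]; simp
  have h2 : (x - 1) * (x^m * ((PP m).map (Int.castRingHom K)).eval t) = (x-1) * (x-1)^(2*m) := by
    rw [← mul_assoc, h1, hfrob, ← pow_succ', hn2]
  have h3 : x^m * ((PP m).map (Int.castRingHom K)).eval t = (x-1)^(2*m) :=
    mul_left_cancel₀ hx1ne h2
  have hxt : x * t = (x-1)^2 := by rw [ht]; linear_combination hxy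
  have h4 : x^m * t^m = (x-1)^(2*m) := by rw [← mul_pow, hxt, ← pow_mul]
  have hPt : aeval t ((PP m).map (Int.castRingHom (ZMod p))) = t^m := by
    rw [aeval_int_map]
    exact mul_left_cancel₀ (pow_ne_zero m hxne) (h3.trans h4.symm)
  set D : Polynomial (ZMod p) := (PP m).map (Int.castRingHom (ZMod p)) - X^m with hD
  have hDdeg : D.natDegree < m + 1 := by
    apply Nat.lt_succ_of_le
    refine le_trans (natDegree_sub_le _ _) ?_
    have hmonic := (PP_monic_deg m).1
    have hdeg := (PP_monic_deg m).2
    simp [hmonic.natDegree_map, hdeg, natDegree_X_pow]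
  have hDt : aeval t D = 0 := by
    rw [hD, map_sub, hPt, map_pow, aeval_X, sub_self]
  set w : Polynomial (ZMod p) :=
    ∑ j ∈ Finset.range (m+1), C (D.coeff j) * (X - 1)^(2*j) * X^(m-j) with hw
  have hwmap : algebraMap (Polynomial (ZMod p)) K w = x^m * aeval t D := by
    have h5 : algebraMap (Polynomial (ZMod p)) K w = aeval x w := by
      calc algebraMap (Polynomial (ZMod p)) K w
          = algebraMap (Polynomial (ZMod p)) K (aeval X w) := by rw [aeval_X_left_apply]
        _ = aeval x w := by
            rw [hx, ← IsScalarTower.coe_toAlgHom' (ZMod p) (Polynomial (ZMod p)) K,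
              aeval_algHom_apply]
    rw [h5, hw, map_sum, aeval_eq_sum_range' hDdeg, Finset.mul_sum]
    refine Finset.sum_congr rfl fun j hj => ?_
    have hj' : j ≤ m := Nat.lt_succ_iff.mp (Finset.mem_range.mp hj)
    have hpow : x^m * t^j = (x-1)^(2*j) * x^(m-j) := by
      have : x^m = x^j * x^(m-j) := by rw [← pow_add, Nat.add_sub_cancel' hj']
      rw [this, mul_comm (x^j) _, mul_assoc, ← mul_pow, hxt, ← pow_mul, mul_comm _ ((x-1)^(2*j))]
    rw [map_mul, map_mul, map_pow, map_pow, map_sub, map_one, aeval_X, aeval_C,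
      Algebra.smul_def]
    linear_combination (algebraMap (ZMod p) K (D.coeff j)) * hpow.symm
  have hw0 : w = 0 := by
    apply RatFunc.algebraMap_injective
    rw [hwmap, hDt, mul_zero, map_zero]
  have hcoeff := L2 m (fun j => D.coeff j) (by rw [← hw]; exact hw0)
  have hD0 : D = 0 := by
    ext i
    rcases le_or_gt i m with h | h
    · simpa using hcoeff i h
    · simp [coeff_eq_zero_of_natDegree_lt (lt_of_lt_of_le hDdeg h)]
  have := sub_eq_zero.mp (hD ▸ hD0)
  exact this

/-- Let `p ≥ 5` be prime, `r ≥ 1`, `Δ` a cyclic group of order `p^r` with generator `δ`,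
`Λ = ℤ_p[Δ]` the group algebra, `ι` the ring automorphism of `Λ` induced by `g ↦ g⁻¹` and
`Λ⁺ ⊆ Λ` the fixed subring of `ι`.  Then there is a distinguished polynomial
`Ψ ∈ ℤ_p[X]` of degree `(p^r - 1)/2` with `v_p(Ψ(0)) = r` such that the `ℤ_p`-algebra map
`ℤ_p[X]/(X·Ψ(X)) → Λ⁺` sending `X` to `[δ] + [δ⁻¹] - 2` is a ring isomorphism: i.e. the
evaluation map `ℤ_p[X] → Λ` at `[δ] + [δ⁻¹] - 2` has kernel the ideal generated by
`X·Ψ(X)` and range `Λ⁺`. -/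
theorem stmt_0 (p : ℕ) [Fact p.Prime] (hp5 : 5 ≤ p) (r : ℕ) (hr : 1 ≤ r)
    (Δ : Type) [CommGroup Δ] [Fintype Δ] (hcard : Fintype.card Δ = p ^ r)
    (δ : Δ) (hδ : ∀ x : Δ, x ∈ Subgroup.zpowers δ) :
    ∃ Ψ : Polynomial ℤ_[p],
      Ψ.Monic
      ∧ (∀ i < Ψ.natDegree, (p : ℤ_[p]) ∣ Ψ.coeff i)
      ∧ Ψ.natDegree = (p ^ r - 1) / 2
      ∧ Ψ.coeff 0 ≠ 0
      ∧ (Ψ.coeff 0).valuation = (r : ℤ)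
      ∧ RingHom.ker (Polynomial.aeval
            (MonoidAlgebra.of ℤ_[p] Δ δ + MonoidAlgebra.of ℤ_[p] Δ δ⁻¹ - 2) :
            Polynomial ℤ_[p] →ₐ[ℤ_[p]] MonoidAlgebra ℤ_[p] Δ)
          = Ideal.span {Polynomial.X * Ψ}
      ∧ (Polynomial.aeval
            (MonoidAlgebra.of ℤ_[p] Δ δ + MonoidAlgebra.of ℤ_[p] Δ δ⁻¹ - 2) :
            Polynomial ℤ_[p] →ₐ[ℤ_[p]] MonoidAlgebra ℤ_[p] Δ).range
          = AlgHom.equalizer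
              (MonoidAlgebra.domCongr ℤ_[p] ℤ_[p] (MulEquiv.inv Δ)).toAlgHom
              (AlgHom.id ℤ_[p] (MonoidAlgebra ℤ_[p] Δ)) := by
  have hp : p.Prime := Fact.out
  have hodd : Odd (p ^ r) := (hp.odd_of_ne_two (by omega)).pow
  set m := (p ^ r - 1) / 2 with hmdef
  have hp_r5 : 5 ≤ p ^ r := le_trans hp5 (Nat.le_self_pow (by omega) p)
  obtain ⟨s, hs⟩ := hodd
  have hn2 : 2 * m + 1 = p ^ r := by omega
  have hm2 : 2 ≤ m := by omega
  have horder : orderOf δ = p ^ r := by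
    rw [orderOf_eq_card_of_forall_mem_zpowers hδ, Nat.card_eq_fintype_card, hcard]
  set u : MonoidAlgebra ℤ_[p] Δ := MonoidAlgebra.of ℤ_[p] Δ δ with hu
  set v : MonoidAlgebra ℤ_[p] Δ := MonoidAlgebra.of ℤ_[p] Δ δ⁻¹ with hv
  set T : MonoidAlgebra ℤ_[p] Δ := u + v - 2 with hT
  have huv : u * v = 1 := by rw [hu, hv, ← map_mul, mul_inv_cancel, map_one]
  have hun : u ^ (p ^ r) = 1 := by
    rw [hu, ← map_pow, ← hcard, pow_card_eq_one, map_one]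
  have hisunit : IsUnit u := IsUnit.of_mul_eq_one v huv
  have hTu : T * u = (u - 1) ^ 2 := by rw [hT]; linear_combination huv
  set Ψ : Polynomial ℤ_[p] := (PP m).map (Int.castRingHom ℤ_[p]) with hΨ
  have hΨmonic : Ψ.Monic := ((PP_monic_deg m).1).map _
  have hΨdeg : Ψ.natDegree = m := by
    rw [hΨ, ((PP_monic_deg m).1).natDegree_map, (PP_monic_deg m).2]
  -- coefficient 0
  have hc0 : Ψ.coeff 0 = (p : ℤ_[p]) ^ r := by
    rw [hΨ, coeff_map, PP_coeff_zero m]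
    have : ((2 * (m:ℤ) + 1 : ℤ) : ℤ_[p]) = ((2*m+1 : ℕ) : ℤ_[p]) := by push_cast; ring
    rw [eq_intCast, this, hn2]
    push_cast
    ring
  have hpne : (p : ℤ_[p]) ≠ 0 := Nat.cast_ne_zero.mpr hp.ne_zero
  -- kernel facts
  have hΨT : T * (Polynomial.aeval T Ψ) = 0 := by
    have hL1 := L1 u v huv m
    rw [hn2, hun, sub_self, ← hT] at hL1
    have heq : (Polynomial.aeval T Ψ)
        = ((PP m).map (Int.castRingHom (MonoidAlgebra ℤ_[p] Δ))).eval T := aeval_int_map T (PP m)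
    have h6 : u ^ (m+1) * (T * Polynomial.aeval T Ψ) = 0 := by
      rw [heq]
      linear_combination (((PP m).map (Int.castRingHom (MonoidAlgebra ℤ_[p] Δ))).eval T * u ^ m) * hTu
        + (u - 1) * hL1
    exact ((hisunit.pow (m+1)).mul_right_eq_zero).mp h6
  have hXΨ : Polynomial.aeval T (X * Ψ) = 0 := by
    rw [map_mul, aeval_X]; exact hΨT
  have hindep : ∀ q : Polynomial ℤ_[p], q.natDegree < m + 1 →
      Polynomial.aeval T q = 0 → q = 0 := by
    intro q hq hq0
    set w : Polynomial ℤ_[p] :=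
      ∑ j ∈ Finset.range (m+1), C (q.coeff j) * (X - 1)^(2*j) * X^(m-j) with hwd
    have hweq : Polynomial.aeval u w = u ^ m * Polynomial.aeval T q := by
      rw [hwd, map_sum, aeval_eq_sum_range' hq, Finset.mul_sum]
      refine Finset.sum_congr rfl fun j hj => ?_
      have hj' : j ≤ m := Nat.lt_succ_iff.mp (Finset.mem_range.mp hj)
      have hpow : u^m * T^j = (u-1)^(2*j) * u^(m-j) := by
        have h7 : u^m = u^j * u^(m-j) := by rw [← pow_add, Nat.add_sub_cancel' hj']
        calc u^m * T^j = (T*u)^j * u^(m-j) := by rw [h7, mul_pow]; ring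
          _ = (u-1)^(2*j) * u^(m-j) := by rw [hTu, ← pow_mul]
      rw [map_mul, map_mul, map_pow, map_pow, map_sub, map_one, aeval_X, aeval_C,
        Algebra.smul_def]
      linear_combination (algebraMap ℤ_[p] (MonoidAlgebra ℤ_[p] Δ) (q.coeff j)) * hpow.symm
    have hw0 : Polynomial.aeval u w = 0 := by rw [hweq, hq0, mul_zero]
    have hwdeg : w.natDegree < p ^ r := by
      refine lt_of_le_of_lt (natDegree_sum_le_of_forall_le _ _ ?_) (by omega : 2*m < p ^ r)
      intro j hj
      have hj' : j ≤ m := Nat.lt_succ_iff.mp (Finset.mem_range.mp hj)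
      refine le_trans (natDegree_mul_le) ?_
      have b1 : (C (q.coeff j) * (X - 1)^(2*j) : Polynomial ℤ_[p]).natDegree ≤ 2*j := by
        refine le_trans (natDegree_mul_le) ?_
        simp only [natDegree_C, zero_add]
        refine le_trans (natDegree_pow_le) ?_
        have hX1 : (X - 1 : Polynomial ℤ_[p]).natDegree = 1 := by
          rw [← C_1, natDegree_X_sub_C]
        rw [hX1]; omega
      have b2 : (X^(m-j) : Polynomial ℤ_[p]).natDegree ≤ m - j := by simp
      omega
    have hwz : w = 0 := L3 δ (p ^ r) horder w hwdeg hw0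
    have hcf := L2 m (fun j => q.coeff j) (by rw [← hwd]; exact hwz)
    ext i
    rcases le_or_gt i m with h | h
    · exact (hcf i h).trans (coeff_zero i).symm
    · simp [coeff_eq_zero_of_natDegree_lt (by omega : q.natDegree < i)]
  refine ⟨Ψ, hΨmonic, ?_, by rw [hΨdeg], ?_, ?_, ?_, ?_⟩
  · -- distinguished
    intro i hi
    rw [hΨdeg] at hi
    have hPP := Ldist p r m hn2
    have hz : ((PP m).coeff i : ZMod p) = 0 := by
      have := congrArg (fun q => Polynomial.coeff q i) hPP
      simpa [coeff_map, coeff_X_pow, Nat.ne_of_lt hi] using this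
    obtain ⟨c, hc⟩ := (ZMod.intCast_zmod_eq_zero_iff_dvd _ p).mp hz
    refine ⟨(c : ℤ_[p]), ?_⟩
    rw [hΨ, coeff_map, eq_intCast, hc]
    push_cast
    ring
  · rw [hc0]; exact pow_ne_zero _ hpne
  · rw [hc0]
    have := PadicInt.valuation_p_pow_mul (p := p) r 1 one_ne_zero
    simpa using this
  · -- kernel
    refine le_antisymm ?_ ?_
    · intro q hq
      rw [RingHom.mem_ker] at hq
      rw [Ideal.mem_span_singleton]
      have hmonic : (X * Ψ).Monic := monic_X.mul hΨmonic
      rw [← Polynomial.modByMonic_eq_zero_iff_dvd hmonic]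
      have hfd : (X * Ψ).natDegree = m + 1 := by
        rw [monic_X.natDegree_mul hΨmonic, natDegree_X, hΨdeg]; omega
      apply hindep
      · by_cases hz : q %ₘ (X * Ψ) = 0
        · simp [hz]
        · have hdlt := degree_modByMonic_lt q hmonic
          rw [natDegree_lt_iff_degree_lt hz, ← hfd,
            degree_eq_natDegree hmonic.ne_zero] at *
          exact_mod_cast hdlt
      · have hdiv := modByMonic_add_div q (X * Ψ)
        have := congrArg (Polynomial.aeval T) hdiv
        rw [map_add, map_mul, hXΨ, zero_mul, add_zero, hq] at this
        exact this
    · rw [Ideal.span_le, Set.singleton_subset_iff]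
      simpa [SetLike.mem_coe, RingHom.mem_ker] using hXΨ
  · -- range
    rw [← Algebra.adjoin_singleton_eq_range_aeval]
    set ι := MonoidAlgebra.domCongr ℤ_[p] ℤ_[p] (MulEquiv.inv Δ) with hι
    have hιsingle : ∀ g : Δ, ι (MonoidAlgebra.of ℤ_[p] Δ g) = MonoidAlgebra.of ℤ_[p] Δ g⁻¹ := by
      intro g
      rw [hι, MonoidAlgebra.of_apply, MonoidAlgebra.of_apply, MonoidAlgebra.domCongr_single]
      rfl
    have hTmem : T ∈ Algebra.adjoin ℤ_[p] {T} := Algebra.self_mem_adjoin_singleton _ _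
    have huvmem : u + v ∈ Algebra.adjoin ℤ_[p] {T} := by
      have : u + v = T + (1 + 1) := by rw [hT]; ring
      rw [this]
      exact add_mem hTmem (add_mem (one_mem _) (one_mem _))
    apply le_antisymm
    · apply Algebra.adjoin_le
      intro z hz
      rw [Set.mem_singleton_iff] at hz
      subst hz
      rw [SetLike.mem_coe, AlgHom.mem_equalizer]
      show ι T = T
      rw [hT, map_sub, map_add, hιsingle, hιsingle, inv_inv]
      have h2 : ι (2 : MonoidAlgebra ℤ_[p] Δ) = 2 := map_ofNat _ 2
      rw [h2, ← hu, ← hv]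
      ring
    · intro f hf
      have hffix : ι f = f := (AlgHom.mem_equalizer _ _ f).mp hf
      have hpows : ∀ a : ℕ, u^a + v^a ∈ Algebra.adjoin ℤ_[p] {T} := by
        refine two_step (fun a => u^a + v^a ∈ Algebra.adjoin ℤ_[p] {T}) ?_ ?_ ?_
        · simpa using add_mem (one_mem (Algebra.adjoin ℤ_[p] {T})) (one_mem _)
        · simpa using huvmem
        · intro k hk hk1
          have hrec : u^(k+2) + v^(k+2) = (u + v) * (u^(k+1) + v^(k+1)) - (u^k + v^k) := by
            linear_combination (-(u^k) - v^k) * huv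
          rw [hrec]
          exact sub_mem (mul_mem huvmem hk1) hk
      have hkey : ∀ g : MonoidAlgebra ℤ_[p] Δ, g + ι g ∈ Algebra.adjoin ℤ_[p] {T} := by
        intro g
        refine MonoidAlgebra.induction_on (motive := fun g => g + ι g ∈ Algebra.adjoin ℤ_[p] {T}) g ?_ ?_ ?_
        · intro g0
          obtain ⟨a, ha⟩ := (isOfFinOrder_of_finite δ).mem_powers_iff_mem_zpowers.mpr (hδ g0)
          have h1 : MonoidAlgebra.of ℤ_[p] Δ g0 = u^a := by rw [← ha, map_pow, hu]
          have h2 : ι (MonoidAlgebra.of ℤ_[p] Δ g0) = v^a := by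
            rw [hιsingle, ← ha, ← inv_pow, ← map_pow]
          rw [h2, h1]
          exact hpows a
        · intro f1 f2 h1 h2
          rw [map_add]
          have : f1 + f2 + (ι f1 + ι f2) = (f1 + ι f1) + (f2 + ι f2) := by ring
          rw [this]
          exact add_mem h1 h2
        · intro c f1 h1
          rw [map_smul, ← smul_add]
          exact Subalgebra.smul_mem _ h1 c
      have h2f : f + f ∈ Algebra.adjoin ℤ_[p] {T} := by
        have := hkey f; rwa [hffix] at this
      have h2unit : IsUnit (2 : ℤ_[p]) := by
        rw [PadicInt.isUnit_iff]
        refine le_antisymm (PadicInt.norm_le_one _) ?_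
        by_contra hlt
        push_neg at hlt
        have hcast : ((2:ℤ) : ℤ_[p]) = (2 : ℤ_[p]) := by push_cast; ring
        have hdvd := (PadicInt.norm_int_lt_one_iff_dvd 2).mp (by rwa [hcast])
        have hle := Int.le_of_dvd (by norm_num) hdvd
        have : (5:ℤ) ≤ (p:ℤ) := by exact_mod_cast hp5
        omega
      obtain ⟨c, hc⟩ : ∃ c : ℤ_[p], c * 2 = 1 :=
        ⟨(h2unit.unit⁻¹ : ℤ_[p]ˣ), by
          have := h2unit.unit.inv_mul
          rwa [h2unit.unit_spec] at this⟩
      have hfc : f = c • (f + f) := by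
        calc f = (1 : ℤ_[p]) • f := (one_smul _ _).symm
          _ = (c * 2) • f := by rw [hc]
          _ = c • ((2:ℤ_[p]) • f) := by rw [mul_smul]
          _ = c • (f + f) := by rw [two_smul]
      rw [hfc]
      exact Subalgebra.smul_mem _ h2f c
end

section
/- Let $p \ge 5$ be a prime and $r \ge 1$ an integer. Let $\Delta$ be a cyclic group of order $p^r$ with generator $\delta$, let $\Lambda = \mathbb{Z}_p[\Delta]$ be the group algebra, let $\iota$ be the ring automorphism of $\Lambda$ induced by $g \mapsto g^{-1}$ on $\Delta$, and let $\Lambda^+$ be the subring of $\Lambda$ fixed by $\iota$. Then $\Lambda^+$ is equal to the $\mathbb{Z}_p$-subalgebra of $\Lambda$ generated by the single element $[\delta] + [\delta^{-1}]$. -/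
/-- Let `p ≥ 5` be prime, `r ≥ 1`, `Δ` a cyclic group of order `p^r` with generator `δ`,
`Λ = ℤ_p[Δ]` the group algebra, `ι` the ring automorphism of `Λ` induced by `g ↦ g⁻¹`,
and `Λ⁺` the fixed subring of `ι`.  Then `Λ⁺` equals the `ℤ_p`-subalgebra of `Λ`
generated by `[δ] + [δ⁻¹]`. -/
theorem stmt_1 (p : ℕ) [Fact p.Prime] (hp5 : 5 ≤ p) (r : ℕ) (hr : 1 ≤ r)
    (Δ : Type) [CommGroup Δ] [Fintype Δ] (hcard : Fintype.card Δ = p ^ r)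
    (δ : Δ) (hδ : ∀ x : Δ, x ∈ Subgroup.zpowers δ) :
    AlgHom.equalizer
        (MonoidAlgebra.domCongr ℤ_[p] ℤ_[p] (MulEquiv.inv Δ)).toAlgHom
        (AlgHom.id ℤ_[p] (MonoidAlgebra ℤ_[p] Δ))
      = Algebra.adjoin ℤ_[p]
          {MonoidAlgebra.of ℤ_[p] Δ δ + MonoidAlgebra.of ℤ_[p] Δ δ⁻¹} := by
  set ι := (MonoidAlgebra.domCongr ℤ_[p] ℤ_[p] (MulEquiv.inv Δ)).toAlgHom with hι
  set A := Algebra.adjoin ℤ_[p]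
      {MonoidAlgebra.of ℤ_[p] Δ δ + MonoidAlgebra.of ℤ_[p] Δ δ⁻¹} with hA
  have hof : ∀ g : Δ, MonoidAlgebra.of ℤ_[p] Δ g = MonoidAlgebra.single g 1 :=
    fun g => rfl
  have hιsingle : ∀ (g : Δ) (a : ℤ_[p]),
      ι (MonoidAlgebra.single g a) = MonoidAlgebra.single g⁻¹ a := by
    intro g a
    simp [hι, MonoidAlgebra.domCongr_single]
  -- step 1: of g + of g⁻¹ ∈ A for all g
  have key : ∀ n : ℕ,
      MonoidAlgebra.of ℤ_[p] Δ (δ ^ n) + MonoidAlgebra.of ℤ_[p] Δ (δ ^ n)⁻¹ ∈ A ∧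
      MonoidAlgebra.of ℤ_[p] Δ (δ ^ (n+1)) + MonoidAlgebra.of ℤ_[p] Δ (δ ^ (n+1))⁻¹ ∈ A := by
    intro n
    induction n with
    | zero =>
      constructor
      · have h0 : MonoidAlgebra.of ℤ_[p] Δ (δ ^ 0) + MonoidAlgebra.of ℤ_[p] Δ (δ ^ 0)⁻¹
            = 1 + 1 := by
          rw [pow_zero, inv_one, map_one]
        rw [h0]
        exact A.add_mem A.one_mem A.one_mem
      · rw [pow_one]
        exact Algebra.subset_adjoin rfl
    | succ n ih =>
      refine ⟨ih.2, ?_⟩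
      have hrec : MonoidAlgebra.of ℤ_[p] Δ (δ ^ (n+2)) + MonoidAlgebra.of ℤ_[p] Δ (δ ^ (n+2))⁻¹
          = (MonoidAlgebra.of ℤ_[p] Δ δ + MonoidAlgebra.of ℤ_[p] Δ δ⁻¹)
              * (MonoidAlgebra.of ℤ_[p] Δ (δ ^ (n+1)) + MonoidAlgebra.of ℤ_[p] Δ (δ ^ (n+1))⁻¹)
            - (MonoidAlgebra.of ℤ_[p] Δ (δ ^ n) + MonoidAlgebra.of ℤ_[p] Δ (δ ^ n)⁻¹) := by
        simp only [mul_add, add_mul, ← map_mul]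
        rw [show δ * δ ^ (n+1) = δ ^ (n+2) from (pow_succ' δ (n+1)).symm,
            show δ * (δ ^ (n+1))⁻¹ = (δ ^ n)⁻¹ by group,
            show δ⁻¹ * δ ^ (n+1) = δ ^ n by group,
            show δ⁻¹ * (δ ^ (n+1))⁻¹ = (δ ^ (n+2))⁻¹ by group]
        abel
      rw [hrec]
      exact Subalgebra.sub_mem A
        (Subalgebra.mul_mem A (Algebra.subset_adjoin rfl) ih.2) ih.1
  have pair_mem : ∀ g : Δ,
      MonoidAlgebra.of ℤ_[p] Δ g + MonoidAlgebra.of ℤ_[p] Δ g⁻¹ ∈ A := by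
    intro g
    obtain ⟨n, rfl⟩ := (IsOfFinOrder.mem_powers_iff_mem_zpowers
      (isOfFinOrder_of_finite δ)).mpr (hδ g)
    exact (key n).1
  apply le_antisymm
  · -- equalizer ≤ adjoin
    intro x hx
    have hfix : ι x = x := hx
    have hsum : x + ι x ∈ A := by
      have hx' : x = x.coeff.sum fun g a => MonoidAlgebra.single g a :=
        (MonoidAlgebra.sum_coeff_single x).symm
      have hιx : ι x = x.coeff.sum fun g a => MonoidAlgebra.single g⁻¹ a := by
        conv_lhs => rw [hx']
        rw [map_finsuppSum]
        exact Finsupp.sum_congr fun g _ => hιsingle g _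
      have heq : x + ι x
          = x.coeff.sum fun g a => MonoidAlgebra.single g a + MonoidAlgebra.single g⁻¹ a := by
        rw [Finsupp.sum_add, ← hx', ← hιx]
      rw [heq]
      apply Subalgebra.sum_mem -- Finsupp.sum is Finset.sum
      intro g hg
      dsimp only
      have : MonoidAlgebra.single g (x.coeff g) + MonoidAlgebra.single g⁻¹ (x.coeff g)
          = (x.coeff g) • (MonoidAlgebra.of ℤ_[p] Δ g + MonoidAlgebra.of ℤ_[p] Δ g⁻¹) := by
        simp [hof, smul_add, MonoidAlgebra.smul_single']
      rw [this]
      exact Subalgebra.smul_mem A (pair_mem g) _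
    rw [hfix] at hsum
    have h2x : (2 : ℤ_[p]) • x ∈ A := by
      have : (2 : ℤ_[p]) • x = x + x := by
        rw [two_smul]
      rwa [this]
    have h2 : IsUnit (2 : ℤ_[p]) := by
      rw [PadicInt.isUnit_iff]
      have hle : ‖(2 : ℤ_[p])‖ ≤ 1 := PadicInt.norm_le_one _
      have hlt : ¬ ‖((2:ℤ) : ℤ_[p])‖ < 1 := by
        rw [PadicInt.norm_int_lt_one_iff_dvd]
        intro h
        have := Int.le_of_dvd (by norm_num) h
        omega
      push_cast at hlt
      linarith [lt_or_eq_of_le hle]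
    obtain ⟨u, hu⟩ := h2
    have : x = (↑u⁻¹ : ℤ_[p]) • ((2 : ℤ_[p]) • x) := by
      rw [← hu, smul_smul, Units.inv_mul, one_smul]
    rw [this]
    exact Subalgebra.smul_mem A h2x _
  · -- adjoin ≤ equalizer
    rw [hA]
    apply Algebra.adjoin_le
    rintro y rfl
    show ι _ = _
    simp [hof, hιsingle, add_comm]
end

section
/- Let $p$ be a prime. Let $\varphi : \mathbb{Z}_p\llbracket X \rrbracket \to \mathbb{Z}_p\llbracket T \rrbracket$ be the continuous $\mathbb{Z}_p$-algebra homomorphism determined by substituting $X \mapsto T^2(1+T)^{-1}$ (note $1+T$ is a unit and $T^2(1+T)^{-1}$ has positive order, so this substitution is well defined). View $\mathbb{Z}_p\llbracket T \rrbracket$ as a $\mathbb{Z}_p\llbracket X \rrbracket$-algebra via $\varphi$. Then the $\mathbb{Z}_p\llbracket X \rrbracket$-algebra homomorphism $\mathbb{Z}_p\llbracket X \rrbracket[\lambda]/(\lambda^2 - (2+X)\lambda + 1) \to \mathbb{Z}_p\llbracket T \rrbracket$ sending $\lambda$ to $1+T$ is a ring isomorphism. In particular, $\mathbb{Z}_p\llbracket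 T \rrbracket$ is free of rank $2$ as a module over $\mathbb{Z}_p\llbracket X \rrbracket$ via $\varphi$. -/
open PowerSeries

section Aux

variable {R : Type*} [CommRing R]

/-- The substitution series `X² (1+X)⁻¹`. -/
noncomputable def sps (R : Type*) [CommRing R] : PowerSeries R :=
  X ^ 2 * Ring.inverse (1 + X)

lemma isUnit_one_add_X : IsUnit (1 + X : PowerSeries R) := by
  rw [PowerSeries.isUnit_iff_constantCoeff]; simp

lemma sps_mul : (sps R) * (1 + X) = X ^ 2 := by
  rw [sps, mul_assoc, Ring.inverse_mul_cancel _ isUnit_one_add_X, mul_one]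

lemma coeff_sps_pow_mul_lt {k m : ℕ} (h : m < 2 * k) (f : PowerSeries R) :
    coeff m ((sps R) ^ k * f) = 0 := by
  have : (sps R) ^ k * f = X ^ (2 * k) * ((Ring.inverse (1 + X)) ^ k * f) := by
    rw [sps, mul_pow, ← pow_mul]; ring
  rw [this, coeff_X_pow_mul', if_neg (by omega)]

lemma coeff_sps_pow_lt {k m : ℕ} (h : m < 2 * k) : coeff m ((sps R) ^ k) = 0 := by
  simpa using coeff_sps_pow_mul_lt h (1 : PowerSeries R)

lemma constantCoeff_inv_one_add_X :
    constantCoeff (Ring.inverse (1 + X : PowerSeries R)) = 1 := by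
  have := congrArg (constantCoeff (R := R)) (sps_mul (R := R)).symm
  have h2 := congrArg (constantCoeff (R := R)) (Ring.mul_inverse_cancel _ (isUnit_one_add_X (R := R)))
  simpa using h2

lemma coeff_sps_pow_self (k : ℕ) : coeff (2 * k) ((sps R) ^ k) = 1 := by
  have : (sps R) ^ k = X ^ (2 * k) * (Ring.inverse (1 + X)) ^ k := by
    rw [sps, mul_pow, ← pow_mul]
  rw [this]
  have := coeff_X_pow_mul ((Ring.inverse (1 + X) : PowerSeries R) ^ k) (2 * k) 0
  simp only [zero_add] at this
  rw [this]
  simp [coeff_zero_eq_constantCoeff, map_pow, constantCoeff_inv_one_add_X]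

/-- Partial sums of the substituted series. -/
noncomputable def partialA (n : ℕ) (f : PowerSeries R) : PowerSeries R :=
  ∑ k ∈ Finset.range n, C (coeff k f) * (sps R) ^ k

lemma eval_trunc (f : PowerSeries R) (n : ℕ) :
    Polynomial.eval₂ (C : R →+* PowerSeries R) (sps R) (trunc n f) = partialA n f := by
  induction n with
  | zero =>
      have h0 : trunc 0 f = 0 := by
        apply Polynomial.ext; intro m; simp [coeff_trunc]
      simp [h0, partialA]
  | succ n ih =>
      rw [trunc_succ, Polynomial.eval₂_add, ih, Polynomial.eval₂_monomial, partialA, partialA,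
        Finset.sum_range_succ]

lemma coeff_partialA (n m : ℕ) (f : PowerSeries R) :
    coeff m (partialA n f) = ∑ k ∈ Finset.range n, coeff k f * coeff m ((sps R) ^ k) := by
  rw [partialA, map_sum]
  exact Finset.sum_congr rfl fun k _ => by rw [coeff_C_mul]

end Aux

section Phi

variable {R : Type*} [CommRing R] (φ : PowerSeries R →+* PowerSeries R)
  (hφ : ∀ (f : PowerSeries R) (n : ℕ),
    φ f - Polynomial.eval₂ (C : R →+* PowerSeries R) (sps R) (trunc n f) ∈ Ideal.span {(X : PowerSeries R) ^ n})

include hφ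

lemma coeff_phi (f : PowerSeries R) {m n : ℕ} (hmn : m < n) :
    coeff m (φ f) = coeff m (partialA n f) := by
  have h := hφ f n
  rw [eval_trunc, Ideal.mem_span_singleton, X_pow_dvd_iff] at h
  have := h m hmn
  rw [map_sub, sub_eq_zero] at this
  exact this

lemma coeff_phi_even (f : PowerSeries R) (n : ℕ) (h : ∀ k < n, coeff k f = 0) :
    coeff (2 * n) (φ f) = coeff n f := by
  rw [coeff_phi φ hφ f (show 2 * n < 2 * n + 1 by omega), coeff_partialA]
  rw [Finset.sum_eq_single n]
  · rw [coeff_sps_pow_self, mul_one]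
  · intro k hk hne
    rcases lt_or_gt_of_ne hne with h1 | h1
    · rw [h k h1, zero_mul]
    · rw [coeff_sps_pow_lt (by omega), mul_zero]
  · intro hn; exact absurd (Finset.mem_range.mpr (by omega)) hn

lemma coeff_phi_lt (f : PowerSeries R) (n m : ℕ) (h : ∀ k < n, coeff k f = 0)
    (hm : m < 2 * n) : coeff m (φ f) = 0 := by
  rw [coeff_phi φ hφ f (Nat.lt_succ_self m), coeff_partialA]
  apply Finset.sum_eq_zero
  intro k _
  rcases lt_or_ge k n with h1 | h1
  · rw [h k h1, zero_mul]
  · rw [coeff_sps_pow_lt (by omega), mul_zero]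

lemma theta_inj {a b : PowerSeries R} (hab : φ a + φ b * X = 0) : a = 0 ∧ b = 0 := by
  have key : ∀ n, coeff n a = 0 ∧ coeff n b = 0 := by
    intro n
    induction n using Nat.strong_induction_on with
    | _ n ih =>
      have ha' : ∀ k < n, coeff k a = 0 := fun k hk => (ih k hk).1
      have hb' : ∀ k < n, coeff k b = 0 := fun k hk => (ih k hk).2
      have hbX : ∀ m, m < 2 * n + 1 → coeff m (φ b * X) = 0 := by
        intro m hm
        cases m with
        | zero => simp
        | succ j =>
            rw [coeff_succ_mul_X]
            exact coeff_phi_lt φ hφ b n j hb' (by omega)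
      have hA : coeff n a = 0 := by
        have h1 := congrArg (coeff (R := R) (2 * n)) hab
        rw [map_add, map_zero, hbX (2 * n) (by omega), add_zero,
          coeff_phi_even φ hφ a n ha'] at h1
        exact h1
      have hB : coeff n b = 0 := by
        have h1 := congrArg (coeff (R := R) (2 * n + 1)) hab
        rw [map_add, map_zero, coeff_succ_mul_X, coeff_phi_even φ hφ b n hb',
          coeff_phi_lt φ hφ a (n + 1)
            (2 * n + 1) (fun k hk => by rcases Nat.lt_succ_iff_lt_or_eq.mp hk with h | h
                                        exacts [ha' k h, h ▸ hA]) (by omega),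
          zero_add] at h1
        exact h1
      exact ⟨hA, hB⟩
  constructor <;> ext n
  · rw [(key n).1, map_zero]
  · rw [(key n).2, map_zero]

end Phi

section Surj

variable {R : Type*} [CommRing R]

/-- The sequence of successive quotients in the division of `g` by powers of `sps`. -/
noncomputable def gseq (g : PowerSeries R) : ℕ → PowerSeries R
  | 0 => g
  | n + 1 =>
      (1 + X) * (mk fun k =>
        coeff (k + 2) (gseq g n - C (coeff 0 (gseq g n)) - C (coeff 1 (gseq g n)) * X))

lemma sps_mul_gseq (g : PowerSeries R) (n : ℕ) :
    sps R * gseq g (n + 1)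
      = gseq g n - C (coeff 0 (gseq g n)) - C (coeff 1 (gseq g n)) * X := by
  set r := gseq g n - C (coeff 0 (gseq g n)) - C (coeff 1 (gseq g n)) * X with hr
  have h2 : X ^ 2 * (mk fun k => coeff (k + 2) r) = r := by
    ext m
    rw [coeff_X_pow_mul']
    split_ifs with h
    · obtain ⟨d, rfl⟩ : ∃ d, m = d + 2 := ⟨m - 2, by omega⟩
      rw [Nat.add_sub_cancel, coeff_mk]
    · have hm : m = 0 ∨ m = 1 := by omega
      rcases hm with rfl | rfl
      · rw [hr]; simp
      · rw [hr]
        simp [coeff_succ_mul_X]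
  calc sps R * ((1 + X) * (mk fun k => coeff (k + 2) r))
      = (sps R * (1 + X)) * (mk fun k => coeff (k + 2) r) := by ring
    _ = X ^ 2 * (mk fun k => coeff (k + 2) r) := by rw [sps_mul]
    _ = r := h2

lemma gseq_telescope (g : PowerSeries R) (n : ℕ) :
    g - partialA n (mk fun j => coeff 0 (gseq g j))
      - partialA n (mk fun j => coeff 1 (gseq g j)) * X
      = (sps R) ^ n * gseq g n := by
  induction n with
  | zero => simp [partialA, gseq]
  | succ n ih =>
      have h1 := sps_mul_gseq g n
      rw [partialA, partialA, Finset.sum_range_succ, Finset.sum_range_succ, coeff_mk, coeff_mk,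
        ← partialA, ← partialA]
      have hps : (sps R) ^ (n + 1) = (sps R) ^ n * sps R := pow_succ _ _
      rw [hps]
      linear_combination ih - (sps R) ^ n * h1

end Surj

section Surj2

variable {R : Type*} [CommRing R] (φ : PowerSeries R →+* PowerSeries R)
  (hφ : ∀ (f : PowerSeries R) (n : ℕ),
    φ f - Polynomial.eval₂ (C : R →+* PowerSeries R) (sps R) (trunc n f) ∈ Ideal.span {(X : PowerSeries R) ^ n})

include hφ

lemma theta_surj (g : PowerSeries R) : ∃ a b : PowerSeries R, φ a + φ b * X = g := by
  refine ⟨mk fun j => coeff 0 (gseq g j), mk fun j => coeff 1 (gseq g j), ?_⟩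
  set a := (mk fun j => coeff 0 (gseq g j) : PowerSeries R)
  set b := (mk fun j => coeff 1 (gseq g j) : PowerSeries R)
  ext m
  have hT := gseq_telescope g (m + 1)
  have hg : g = partialA (m + 1) a + partialA (m + 1) b * X + (sps R) ^ (m + 1) * gseq g (m + 1) := by
    linear_combination hT
  have h0 : coeff m ((sps R) ^ (m + 1) * gseq g (m + 1)) = 0 :=
    coeff_sps_pow_mul_lt (by omega) _
  have hX : coeff m (φ b * X) = coeff m (partialA (m + 1) b * X) := by
    cases m with
    | zero => simp
    | succ j => rw [coeff_succ_mul_X, coeff_succ_mul_X, coeff_phi φ hφ b (show j < j + 1 + 1 by omega)]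
  rw [map_add, hX, coeff_phi φ hφ a (Nat.lt_succ_self m)]
  conv_rhs => rw [hg]
  rw [map_add, map_add, h0, add_zero]

end Surj2

section Main

variable {R : Type*} [CommRing R] (φ : PowerSeries R →+* PowerSeries R)
  (hφ : ∀ (f : PowerSeries R) (n : ℕ),
    φ f - Polynomial.eval₂ (C : R →+* PowerSeries R) (sps R) (trunc n f) ∈ Ideal.span {(X : PowerSeries R) ^ n})

include hφ

lemma phi_X : φ (X : PowerSeries R) = sps R := by
  ext m
  rw [coeff_phi φ hφ X (show m < m + 2 by omega), coeff_partialA]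
  rw [Finset.sum_eq_single 1]
  · simp
  · intro k hk hne; simp [coeff_X, hne]
  · intro h1; exact absurd (Finset.mem_range.mpr (by omega)) h1

lemma phi_pair_inj {a b : PowerSeries R} (h : φ a + φ b * (1 + X) = 0) : a = 0 ∧ b = 0 := by
  have h2 : φ (a + b) + φ b * X = 0 := by rw [map_add]; linear_combination h
  obtain ⟨h3, h4⟩ := theta_inj φ hφ h2
  refine ⟨?_, h4⟩
  rw [h4, add_zero] at h3
  exact h3

end Main

lemma withbot_lt_two {d : WithBot ℕ} (h : d < 2) : d ≤ 1 := by
  cases d with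
  | bot => exact bot_le
  | coe n =>
      have h3 : WithBot.some n < WithBot.some 2 := h
      have h4 : n ≤ 1 := by have := WithBot.coe_lt_coe.mp h3; omega
      exact (WithBot.coe_le_coe.mpr h4 : WithBot.some n ≤ WithBot.some 1)

/-- Let `φ : ℤ_p⟦X⟧ → ℤ_p⟦T⟧` be the continuous `ℤ_p`-algebra homomorphism determined by
substituting `X ↦ T²(1+T)⁻¹` (characterized by fixing constants and by the property that
`φ f` agrees with the evaluation of any truncation of `f` at `T²(1+T)⁻¹` modulo arbitrarily
high powers of `T`).  Then the `ℤ_p⟦X⟧`-algebra homomorphism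
`ℤ_p⟦X⟧[λ]/(λ² - (2+X)λ + 1) → ℤ_p⟦T⟧` sending `λ` to `1+T` is a ring isomorphism;
in particular `ℤ_p⟦T⟧` is free of rank 2 over `ℤ_p⟦X⟧` via `φ`, with basis `1, 1+T`. -/
theorem stmt_5 (p : ℕ) [Fact p.Prime]
    (φ : PowerSeries ℤ_[p] →+* PowerSeries ℤ_[p])
    (hφC : ∀ a : ℤ_[p], φ ((PowerSeries.C : ℤ_[p] →+* PowerSeries ℤ_[p]) a) = (PowerSeries.C : ℤ_[p] →+* PowerSeries ℤ_[p]) a)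
    (hφ : ∀ (f : PowerSeries ℤ_[p]) (n : ℕ),
      φ f - Polynomial.eval₂ ((PowerSeries.C : ℤ_[p] →+* PowerSeries ℤ_[p]))
          (PowerSeries.X ^ 2 * Ring.inverse (1 + PowerSeries.X)) (PowerSeries.trunc n f)
        ∈ Ideal.span {(PowerSeries.X : PowerSeries ℤ_[p]) ^ n}) :
    RingHom.ker (Polynomial.eval₂RingHom φ (1 + PowerSeries.X))
        = Ideal.span {Polynomial.X ^ 2
            - Polynomial.C (2 + PowerSeries.X : PowerSeries ℤ_[p]) * Polynomial.X + 1}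
      ∧ Function.Surjective (Polynomial.eval₂RingHom φ (1 + PowerSeries.X))
      ∧ Function.Bijective (fun ab : PowerSeries ℤ_[p] × PowerSeries ℤ_[p] =>
          φ ab.1 + φ ab.2 * (1 + PowerSeries.X)) := by
  have hφ' : ∀ (f : PowerSeries ℤ_[p]) (n : ℕ),
      φ f - Polynomial.eval₂ (C : ℤ_[p] →+* PowerSeries ℤ_[p]) (sps ℤ_[p]) (trunc n f)
        ∈ Ideal.span {(X : PowerSeries ℤ_[p]) ^ n} := hφ
  set q : Polynomial (PowerSeries ℤ_[p]) :=
    Polynomial.X ^ 2 - Polynomial.C (2 + PowerSeries.X : PowerSeries ℤ_[p]) * Polynomial.X + 1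
    with hq
  -- bijectivity of the pair map
  have hinj : Function.Injective (fun ab : PowerSeries ℤ_[p] × PowerSeries ℤ_[p] =>
      φ ab.1 + φ ab.2 * (1 + PowerSeries.X)) := by
    intro x y hxy
    simp only at hxy
    have hz : φ (x.1 - y.1) + φ (x.2 - y.2) * (1 + X) = 0 := by
      rw [map_sub, map_sub]; linear_combination hxy
    obtain ⟨h1, h2⟩ := phi_pair_inj φ hφ' hz
    exact Prod.ext (sub_eq_zero.mp h1) (sub_eq_zero.mp h2)
  have hsurj2 : Function.Surjective (fun ab : PowerSeries ℤ_[p] × PowerSeries ℤ_[p] =>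
      φ ab.1 + φ ab.2 * (1 + PowerSeries.X)) := by
    intro g
    obtain ⟨a, b, hab⟩ := theta_surj φ hφ' g
    refine ⟨(a - b, b), ?_⟩
    simp only
    rw [map_sub]
    linear_combination hab
  -- the quadratic maps to zero
  have hq0 : Polynomial.eval₂ φ (1 + PowerSeries.X) q = 0 := by
    rw [hq]
    simp only [Polynomial.eval₂_add, Polynomial.eval₂_sub, Polynomial.eval₂_mul,
      Polynomial.eval₂_pow, Polynomial.eval₂_X, Polynomial.eval₂_C, Polynomial.eval₂_one]
    rw [map_add, phi_X φ hφ', map_ofNat]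
    linear_combination -(sps_mul (R := ℤ_[p]))
  -- surjectivity of eval₂
  have hsurj : Function.Surjective (Polynomial.eval₂RingHom φ (1 + PowerSeries.X)) := by
    intro g
    obtain ⟨ab, hab⟩ := hsurj2 g
    refine ⟨Polynomial.C ab.1 + Polynomial.C ab.2 * Polynomial.X, ?_⟩
    simp only [Polynomial.coe_eval₂RingHom, Polynomial.eval₂_add, Polynomial.eval₂_mul,
      Polynomial.eval₂_C, Polynomial.eval₂_X]
    exact hab
  refine ⟨?_, hsurj, hinj, hsurj2⟩
  -- kernel computation
  have hmq : q.Monic := by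
    rw [hq]; monicity!
  apply le_antisymm
  · intro P hP
    rw [RingHom.mem_ker, Polynomial.coe_eval₂RingHom] at hP
    have hdiv := Polynomial.modByMonic_add_div P q
    have hdeg : (P %ₘ q).degree ≤ 1 := by
      have h2 := Polynomial.degree_modByMonic_lt P hmq
      have hqdeg : q.degree = 2 := by rw [hq]; compute_degree!
      exact withbot_lt_two (hqdeg ▸ h2)
    have hrep := Polynomial.eq_X_add_C_of_degree_le_one hdeg
    have heval := congrArg (Polynomial.eval₂ φ (1 + PowerSeries.X)) hdiv
    rw [Polynomial.eval₂_add, Polynomial.eval₂_mul, hq0, zero_mul, add_zero, hP, hrep,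
      Polynomial.eval₂_add, Polynomial.eval₂_mul, Polynomial.eval₂_C, Polynomial.eval₂_X] at heval
    simp only [Polynomial.eval₂_C] at heval
    have hz : φ ((P %ₘ q).coeff 0) + φ ((P %ₘ q).coeff 1) * (1 + X) = 0 := by
      linear_combination heval
    obtain ⟨h1, h2⟩ := phi_pair_inj φ hφ' hz
    have hr0 : P %ₘ q = 0 := by rw [hrep, h1, h2]; simp
    rw [Ideal.mem_span_singleton]
    refine ⟨P /ₘ q, ?_⟩
    conv_lhs => rw [← hdiv]
    rw [hr0, zero_add]
  · rw [Ideal.span_le, Set.singleton_subset_iff]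
    rw [SetLike.mem_coe, RingHom.mem_ker, Polynomial.coe_eval₂RingHom]
    exact hq0
end

section
/- Let $p$ be a prime and let $\varphi : \mathbb{Z}_p\llbracket X \rrbracket \to \mathbb{Z}_p\llbracket T \rrbracket$ be the continuous $\mathbb{Z}_p$-algebra homomorphism determined by substituting $X \mapsto T^2(1+T)^{-1}$. Then $\varphi$ is injective, and for every nonzero $f \in \mathbb{Z}_p\llbracket X \rrbracket$ the induced ring homomorphism $\mathbb{Z}_p\llbracket X \rrbracket/(f) \to \mathbb{Z}_p\llbracket T \rrbracket/(\varphi(f))$ is injective; equivalently, $\varphi^{-1}\big(\varphi(f)\,\mathbb{Z}_p\llbracket T \rrbracket\big) = f\,\mathbb{Z}_p\llbracket X \rrbracket$. -/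
open PowerSeries

namespace Stmt6Aux

variable {p : ℕ} [Fact p.Prime]

noncomputable def g : PowerSeries ℤ_[p] := X ^ 2 * Ring.inverse (1 + X)

lemma isUnit_one_add_X : IsUnit (1 + X : PowerSeries ℤ_[p]) := by
  rw [PowerSeries.isUnit_iff_constantCoeff]
  simp

lemma g_mul_one_add_X : (g : PowerSeries ℤ_[p]) * (1 + X) = X ^ 2 := by
  rw [g, mul_assoc, Ring.inverse_mul_cancel _ isUnit_one_add_X, mul_one]

lemma g_pow_eq (k : ℕ) : (g : PowerSeries ℤ_[p]) ^ k
    = X ^ (2 * k) * (Ring.inverse (1 + X)) ^ k := by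
  rw [g, mul_pow, ← pow_mul]

lemma const_inv : constantCoeff (R := ℤ_[p]) (Ring.inverse (1 + X)) = 1 := by
  have h := Ring.mul_inverse_cancel (1 + X : PowerSeries ℤ_[p]) isUnit_one_add_X
  have h2 := congrArg (constantCoeff (R := ℤ_[p])) h
  simpa using h2

lemma coeff_g_pow_low {m k : ℕ} (h : m < 2 * k) :
    coeff (R := ℤ_[p]) m ((g : PowerSeries ℤ_[p]) ^ k) = 0 := by
  refine PowerSeries.X_pow_dvd_iff.mp ?_ m h
  exact ⟨(Ring.inverse (1 + X)) ^ k, g_pow_eq k⟩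

lemma coeff_g_pow_self (k : ℕ) :
    coeff (R := ℤ_[p]) (2 * k) ((g : PowerSeries ℤ_[p]) ^ k) = 1 := by
  rw [g_pow_eq k]
  have : coeff (R := ℤ_[p]) (0 + 2 * k) (X ^ (2 * k) * (Ring.inverse (1 + X) : PowerSeries ℤ_[p]) ^ k)
      = coeff (R := ℤ_[p]) 0 ((Ring.inverse (1 + X) : PowerSeries ℤ_[p]) ^ k) :=
    coeff_X_pow_mul _ _ _
  rw [zero_add] at this
  rw [this, coeff_zero_eq_constantCoeff, map_pow, const_inv, one_pow]

lemma eval2_trunc (a : PowerSeries ℤ_[p]) (N : ℕ) :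
    Polynomial.eval₂ (C (R := ℤ_[p])) (g : PowerSeries ℤ_[p]) (trunc N a)
      = ∑ k ∈ Finset.range N, C (R := ℤ_[p]) (coeff (R := ℤ_[p]) k a) * g ^ k := by
  induction N with
  | zero => simp [trunc_zero']
  | succ n ih =>
      rw [trunc_succ, Polynomial.eval₂_add, ih, Polynomial.eval₂_monomial,
        Finset.sum_range_succ]


lemma eq_zero_of_forall_dvd (s : PowerSeries ℤ_[p])
    (h : ∀ N, (X : PowerSeries ℤ_[p]) ^ N ∣ s) : s = 0 := by
  ext n
  simpa using PowerSeries.X_pow_dvd_iff.mp (h (n + 1)) n n.lt_succ_self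

noncomputable def shift2 (s : PowerSeries ℤ_[p]) : PowerSeries ℤ_[p] :=
  mk fun n => coeff (R := ℤ_[p]) (n + 2) s

lemma X_sq_shift2 (s : PowerSeries ℤ_[p]) (h0 : coeff (R := ℤ_[p]) 0 s = 0)
    (h1 : coeff (R := ℤ_[p]) 1 s = 0) : X ^ 2 * shift2 s = s := by
  ext n
  rw [coeff_X_pow_mul']
  rcases n with _ | _ | n
  · simpa using h0.symm
  · simpa using h1.symm
  · simp [shift2, coeff_mk, Nat.succ_sub_one]

noncomputable def step (s : PowerSeries ℤ_[p]) : PowerSeries ℤ_[p] :=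
  (1 + X) * shift2 (s - C (R := ℤ_[p]) (coeff (R := ℤ_[p]) 0 s) - C (R := ℤ_[p]) (coeff (R := ℤ_[p]) 1 s) * X)

lemma step_spec (s : PowerSeries ℤ_[p]) :
    s = C (R := ℤ_[p]) (coeff (R := ℤ_[p]) 0 s) + C (R := ℤ_[p]) (coeff (R := ℤ_[p]) 1 s) * X + g * step s := by
  have key : (g : PowerSeries ℤ_[p]) * step s
      = s - C (R := ℤ_[p]) (coeff (R := ℤ_[p]) 0 s) - C (R := ℤ_[p]) (coeff (R := ℤ_[p]) 1 s) * X := by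
    rw [step, ← mul_assoc, g_mul_one_add_X]
    apply X_sq_shift2
    · simp [coeff_C]
    · simp [coeff_C, PowerSeries.coeff_succ_mul_X]
  rw [key]; ring

noncomputable def seqq (q : PowerSeries ℤ_[p]) (n : ℕ) : PowerSeries ℤ_[p] := step^[n] q

lemma partial_sum (q : PowerSeries ℤ_[p]) (N : ℕ) :
    q = (∑ k ∈ Finset.range N,
        g ^ k * (C (R := ℤ_[p]) (coeff (R := ℤ_[p]) 0 (seqq q k)) + C (R := ℤ_[p]) (coeff (R := ℤ_[p]) 1 (seqq q k)) * X))
      + g ^ N * seqq q N := by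
  induction N with
  | zero => simp [seqq]
  | succ n ih =>
      have hstep : seqq q n
          = C (R := ℤ_[p]) (coeff (R := ℤ_[p]) 0 (seqq q n)) + C (R := ℤ_[p]) (coeff (R := ℤ_[p]) 1 (seqq q n)) * X
            + g * seqq q (n + 1) := by
        have : seqq q (n + 1) = step (seqq q n) := Function.iterate_succ_apply' step n q
        rw [this]
        exact step_spec (seqq q n)
      calc q = (∑ k ∈ Finset.range n,
            g ^ k * (C (R := ℤ_[p]) (coeff (R := ℤ_[p]) 0 (seqq q k)) + C (R := ℤ_[p]) (coeff (R := ℤ_[p]) 1 (seqq q k)) * X))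
          + g ^ n * seqq q n := ih
        _ = (∑ k ∈ Finset.range n,
            g ^ k * (C (R := ℤ_[p]) (coeff (R := ℤ_[p]) 0 (seqq q k)) + C (R := ℤ_[p]) (coeff (R := ℤ_[p]) 1 (seqq q k)) * X))
          + g ^ n * (C (R := ℤ_[p]) (coeff (R := ℤ_[p]) 0 (seqq q n)) + C (R := ℤ_[p]) (coeff (R := ℤ_[p]) 1 (seqq q n)) * X
            + g * seqq q (n + 1)) := by rw [← hstep]
        _ = _ := by rw [Finset.sum_range_succ]; ring

lemma X_pow_dvd_g_pow (N : ℕ) : (X : PowerSeries ℤ_[p]) ^ N ∣ g ^ N := by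
  refine ⟨X ^ N * (Ring.inverse (1 + X)) ^ N, ?_⟩
  rw [g_pow_eq, two_mul, pow_add, mul_assoc]

section Phi

variable (φ : PowerSeries ℤ_[p] →+* PowerSeries ℤ_[p])
  (hφ : ∀ (f : PowerSeries ℤ_[p]) (n : ℕ),
      φ f - Polynomial.eval₂ (PowerSeries.C (R := ℤ_[p]))
          (PowerSeries.X ^ 2 * Ring.inverse (1 + PowerSeries.X)) (PowerSeries.trunc n f)
        ∈ Ideal.span {(PowerSeries.X : PowerSeries ℤ_[p]) ^ n})

include hφ

lemma repr (a : PowerSeries ℤ_[p]) (N : ℕ) :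
    (X : PowerSeries ℤ_[p]) ^ N ∣
      φ a - ∑ k ∈ Finset.range N, C (R := ℤ_[p]) (coeff (R := ℤ_[p]) k a) * g ^ k := by
  have h := hφ a N
  rw [Ideal.mem_span_singleton] at h
  rwa [show (PowerSeries.X ^ 2 * Ring.inverse (1 + PowerSeries.X) : PowerSeries ℤ_[p]) = g
      from rfl, eval2_trunc] at h

lemma coeff_phi (a : PowerSeries ℤ_[p]) (d : ℕ) (hd : ∀ m < d, coeff (R := ℤ_[p]) m a = 0) :
    (∀ m < 2 * d, coeff (R := ℤ_[p]) m (φ a) = 0) ∧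
      coeff (R := ℤ_[p]) (2 * d) (φ a) = coeff (R := ℤ_[p]) d a := by
  have hre := repr φ hφ a (2 * d + 1)
  have hdec : ∀ m ≤ 2 * d, coeff (R := ℤ_[p]) m (φ a)
      = ∑ k ∈ Finset.range (2 * d + 1), coeff (R := ℤ_[p]) k a * coeff (R := ℤ_[p]) m (g ^ k) := by
    intro m hm
    have h0 : coeff (R := ℤ_[p]) m (φ a
        - ∑ k ∈ Finset.range (2 * d + 1), C (R := ℤ_[p]) (coeff (R := ℤ_[p]) k a) * g ^ k) = 0 :=
      PowerSeries.X_pow_dvd_iff.mp hre m (by omega)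
    rw [map_sub, sub_eq_zero] at h0
    rw [h0, map_sum]
    exact Finset.sum_congr rfl fun k _ => coeff_C_mul _ _ _
  constructor
  · intro m hm
    rw [hdec m (le_of_lt hm)]
    refine Finset.sum_eq_zero fun k _ => ?_
    rcases lt_or_ge k d with hk | hk
    · rw [hd k hk, zero_mul]
    · rw [coeff_g_pow_low (by omega), mul_zero]
  · rw [hdec _ le_rfl, Finset.sum_eq_single d]
    · rw [coeff_g_pow_self, mul_one]
    · intro k _ hkd
      rcases lt_or_ge k d with hk | hk
      · rw [hd k hk, zero_mul]
      · rw [coeff_g_pow_low (by omega), mul_zero]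
    · intro hmem
      exact absurd (Finset.mem_range.mpr (by omega)) hmem

lemma phi_ne_zero (c : PowerSeries ℤ_[p]) (hc : c ≠ 0) : φ c ≠ 0 := by
  classical
  have hex : ∃ n, coeff (R := ℤ_[p]) n c ≠ 0 := by
    by_contra h
    push_neg at h
    exact hc (PowerSeries.ext fun n => by simpa using h n)
  set d := Nat.find hex with hdd
  have hd : ∀ m < d, coeff (R := ℤ_[p]) m c = 0 := fun m hm => by
    have := Nat.find_min hex hm
    simpa using this
  intro h0
  have := (coeff_phi φ hφ c d hd).2
  rw [h0, map_zero] at this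
  exact Nat.find_spec hex this.symm

lemma uniq (a b : PowerSeries ℤ_[p]) (h : φ a + φ b * X = 0) : a = 0 ∧ b = 0 := by
  classical
  have hbX : ∀ n, coeff (R := ℤ_[p]) (n + 1) (φ b * X) = coeff (R := ℤ_[p]) n (φ b) :=
    fun n => coeff_succ_mul_X n (φ b)
  have hbX0 : coeff (R := ℤ_[p]) 0 (φ b * X) = 0 := by
    rw [coeff_zero_eq_constantCoeff, map_mul, constantCoeff_X, mul_zero]
  have hb : b = 0 := by
    by_contra hb0
    have hexb : ∃ n, coeff (R := ℤ_[p]) n b ≠ 0 := by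
      by_contra hh; push_neg at hh
      exact hb0 (PowerSeries.ext fun n => by simpa using hh n)
    set e := Nat.find hexb with hee
    have hble : ∀ m < e, coeff (R := ℤ_[p]) m b = 0 := fun m hm => by
      simpa using Nat.find_min hexb hm
    have hcb := coeff_phi φ hφ b e hble
    by_cases ha0 : a = 0
    · subst ha0
      rw [map_zero, zero_add] at h
      rcases mul_eq_zero.mp h with h1 | h2
      · exact phi_ne_zero φ hφ b hb0 h1
      · exact PowerSeries.X_ne_zero h2
    · have hexa : ∃ n, coeff (R := ℤ_[p]) n a ≠ 0 := by
        by_contra hh; push_neg at hh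
        exact ha0 (PowerSeries.ext fun n => by simpa using hh n)
      set d := Nat.find hexa with hdd
      have hale : ∀ m < d, coeff (R := ℤ_[p]) m a = 0 := fun m hm => by
        simpa using Nat.find_min hexa hm
      have hca := coeff_phi φ hφ a d hale
      rcases lt_or_ge (2 * d) (2 * e + 1) with hlt | hle
      · -- evaluate coefficient 2*d
        have h2d : coeff (R := ℤ_[p]) (2 * d) (φ a + φ b * X) = 0 := by rw [h, map_zero]
        rw [map_add, hca.2] at h2d
        have hz : coeff (R := ℤ_[p]) (2 * d) (φ b * X) = 0 := by
          rcases Nat.eq_zero_or_pos d with hd0 | hd0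
          · rw [hd0]; simpa using hbX0
          · have : 2 * d = (2 * d - 1) + 1 := by omega
            rw [this, hbX]
            exact hcb.1 _ (by omega)
        rw [hz, add_zero] at h2d
        exact Nat.find_spec hexa h2d
      · have h2e : coeff (R := ℤ_[p]) (2 * e + 1) (φ a + φ b * X) = 0 := by rw [h, map_zero]
        rw [map_add, hbX, hcb.2, hca.1 _ (by omega)] at h2e
        rw [zero_add] at h2e
        exact Nat.find_spec hexb h2e
  subst hb
  rw [map_zero, zero_mul, add_zero] at h
  constructor
  · by_contra ha0
    exact phi_ne_zero φ hφ a ha0 h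
  · rfl


lemma exist (q : PowerSeries ℤ_[p]) :
    ∃ a b : PowerSeries ℤ_[p], q = φ a + φ b * X := by
  set a : PowerSeries ℤ_[p] := mk fun n => coeff (R := ℤ_[p]) 0 (seqq q n) with ha
  set b : PowerSeries ℤ_[p] := mk fun n => coeff (R := ℤ_[p]) 1 (seqq q n) with hb
  refine ⟨a, b, ?_⟩
  have key : ∀ N, (X : PowerSeries ℤ_[p]) ^ N ∣ (φ a + φ b * X - q) := by
    intro N
    have hra := repr φ hφ a N
    have hrb := repr φ hφ b N
    set Sa := ∑ k ∈ Finset.range N, C (R := ℤ_[p]) (coeff (R := ℤ_[p]) k a) * g ^ k with hSa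
    set Sb := ∑ k ∈ Finset.range N, C (R := ℤ_[p]) (coeff (R := ℤ_[p]) k b) * g ^ k with hSb
    have hS : Sa + Sb * X = ∑ k ∈ Finset.range N,
        g ^ k * (C (R := ℤ_[p]) (coeff (R := ℤ_[p]) 0 (seqq q k)) + C (R := ℤ_[p]) (coeff (R := ℤ_[p]) 1 (seqq q k)) * X) := by
      rw [hSa, hSb, Finset.sum_mul, ← Finset.sum_add_distrib]
      refine Finset.sum_congr rfl fun k _ => ?_
      rw [ha, hb]
      simp only [coeff_mk]
      ring
    have hsplit : φ a + φ b * X - q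
        = (φ a - Sa) + (φ b - Sb) * X + (Sa + Sb * X - q) := by ring
    have hq : Sa + Sb * X - q = -(g ^ N * seqq q N) := by
      rw [hS]
      have := partial_sum q N
      linear_combination -this
    rw [hsplit, hq]
    exact dvd_add (dvd_add hra (hrb.mul_right X))
      (dvd_neg.mpr ((X_pow_dvd_g_pow N).mul_right _))
  have h0 := eq_zero_of_forall_dvd _ key
  have := sub_eq_zero.mp h0
  exact this.symm

end Phi

end Stmt6Aux

/-- Let `φ : ℤ_p⟦X⟧ → ℤ_p⟦T⟧` be the continuous `ℤ_p`-algebra homomorphism determined by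
substituting `X ↦ T²(1+T)⁻¹`.  Then `φ` is injective, and for every nonzero
`f ∈ ℤ_p⟦X⟧` one has `φ⁻¹(φ(f)·ℤ_p⟦T⟧) = f·ℤ_p⟦X⟧`. -/
theorem stmt_6 (p : ℕ) [Fact p.Prime]
    (φ : PowerSeries ℤ_[p] →+* PowerSeries ℤ_[p])
    (hφC : ∀ a : ℤ_[p], φ (PowerSeries.C (R := ℤ_[p]) a) = PowerSeries.C (R := ℤ_[p]) a)
    (hφ : ∀ (f : PowerSeries ℤ_[p]) (n : ℕ),
      φ f - Polynomial.eval₂ (PowerSeries.C (R := ℤ_[p]))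
          (PowerSeries.X ^ 2 * Ring.inverse (1 + PowerSeries.X)) (PowerSeries.trunc n f)
        ∈ Ideal.span {(PowerSeries.X : PowerSeries ℤ_[p]) ^ n}) :
    Function.Injective φ
      ∧ ∀ f : PowerSeries ℤ_[p], f ≠ 0 →
          Ideal.comap φ (Ideal.span {φ f}) = Ideal.span {f} := by
  constructor
  · intro x y hxy
    by_contra hne
    have hsub : x - y ≠ 0 := sub_ne_zero.mpr hne
    exact Stmt6Aux.phi_ne_zero φ hφ _ hsub (by rw [map_sub, hxy, sub_self])
  · intro f _
    apply le_antisymm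
    · intro h hh
      rw [Ideal.mem_comap, Ideal.mem_span_singleton] at hh
      obtain ⟨q, hq⟩ := hh
      obtain ⟨a, b, hab⟩ := Stmt6Aux.exist φ hφ q
      have h1 : φ (h - f * a) + φ (-(f * b)) * X = 0 := by
        rw [map_sub, map_neg, map_mul, map_mul, hq, hab]
        ring
      have h2 := Stmt6Aux.uniq φ hφ _ _ h1
      have h3 : h = f * a := by
        have := h2.1
        rwa [sub_eq_zero] at this
      rw [Ideal.mem_span_singleton]
      exact ⟨a, h3⟩
    · rw [Ideal.span_le, Set.singleton_subset_iff]
      rw [SetLike.mem_coe, Ideal.mem_comap]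
      exact Ideal.mem_span_singleton_self _
end

section
/- Let $p$ be a prime and $N \ge 2$ an integer with $p \nmid (N-1)$ and $v_p(N+1) = r \ge 1$. Let $\lambda = 1+T \in \mathbb{Z}_p\llbracket T \rrbracket$, a unit. Then the element $\lambda + \lambda^{-1} - \lambda^{N} - \lambda^{-N}$ is an associate of $T\,\big((1+T)^{p^r} - 1\big)$ in $\mathbb{Z}_p\llbracket T \rrbracket$; that is, there is a unit $w \in \mathbb{Z}_p\llbracket T \rrbracket^{\times}$ with $\lambda + \lambda^{-1} - \lambda^{N} - \lambda^{-N} = w \cdot T\,\big((1+T)^{p^r} - 1\big).$ -/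
open PowerSeries

lemma isUnit_padic_cast (p : ℕ) [Fact p.Prime] (k : ℤ) (hk : ¬ (p : ℤ) ∣ k) :
    IsUnit ((k : ℤ_[p])) := by
  rw [PadicInt.isUnit_iff]
  refine le_antisymm (PadicInt.norm_le_one _) ?_
  by_contra h
  push_neg at h
  exact hk ((PadicInt.norm_int_lt_one_iff_dvd k).mp h)

lemma stmt_9_aux (p : ℕ) [Fact p.Prime] (N r m : ℕ) (hN : 2 ≤ N)
    (hNm : ¬ (p : ℤ) ∣ (N - 1 : ℤ)) (hm : N + 1 = p ^ r * m) (hpm : ¬ p ∣ m)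
    (L Li : PowerSeries ℤ_[p]) (hLi : L * Li = 1) (hlam : L = 1 + PowerSeries.X) :
    ∃ w : (PowerSeries ℤ_[p])ˣ,
      L + Li - L ^ N - Li ^ N
        = (w : PowerSeries ℤ_[p])
            * (PowerSeries.X * ((1 + PowerSeries.X) ^ (p ^ r) - 1)) := by
  have h0 : ∀ k : ℕ, Li ^ k * L ^ k = 1 := fun k => by
    rw [← mul_pow, mul_comm Li L, hLi, one_pow]
  have h1 : Li ^ N * L ^ (N + 1) = L := by
    rw [pow_succ, ← mul_assoc, h0, one_mul]
  have h2' : ∀ k : ℕ, Li ^ (k + 1) * L ^ k = Li := fun k => by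
    rw [pow_succ, mul_right_comm, h0, one_mul]
  have h2 : Li ^ N * L ^ (N - 1) = Li := by
    have := h2' (N - 1)
    rwa [show N - 1 + 1 = N by omega] at this
  have h3 : Li ^ N * (L ^ (N + 1) * L ^ (N - 1)) = L ^ N := by
    have he : L ^ (N + 1) * L ^ (N - 1) = L ^ N * L ^ N := by
      rw [← pow_add, ← pow_add]; congr 1; omega
    rw [he, ← mul_assoc, h0, one_mul]
  have key : L + Li - L ^ N - Li ^ N
      = -(Li ^ N) * ((L ^ (N + 1) - 1) * (L ^ (N - 1) - 1)) := by
    calc L + Li - L ^ N - Li ^ N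
        = -(Li ^ N * (L ^ (N + 1) * L ^ (N - 1))) + Li ^ N * L ^ (N + 1)
            + Li ^ N * L ^ (N - 1) - Li ^ N := by rw [h1, h2, h3]; ring
      _ = -(Li ^ N) * ((L ^ (N + 1) - 1) * (L ^ (N - 1) - 1)) := by ring
  have hcL : constantCoeff L = 1 := by rw [hlam]; simp
  have hfac1 : L ^ (N - 1) - 1
      = (∑ i ∈ Finset.range (N - 1), L ^ i) * PowerSeries.X := by
    have hX : (PowerSeries.X : PowerSeries ℤ_[p]) = L - 1 := by rw [hlam]; ring
    rw [hX, geom_sum_mul]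
  have hfac2 : L ^ (N + 1) - 1
      = (∑ i ∈ Finset.range m, (L ^ p ^ r) ^ i) * (L ^ p ^ r - 1) := by
    rw [geom_sum_mul, ← pow_mul, ← hm]
  have hug1 : IsUnit (∑ i ∈ Finset.range (N - 1), L ^ i) := by
    rw [PowerSeries.isUnit_iff_constantCoeff, map_sum]
    simp only [map_pow, hcL, one_pow, Finset.sum_const, Finset.card_range, nsmul_eq_mul,
      mul_one]
    have : (((N : ℤ) - 1 : ℤ) : ℤ_[p]) = ((N - 1 : ℕ) : ℤ_[p]) := by
      have : ((N - 1 : ℕ) : ℤ) = (N : ℤ) - 1 := by omega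
      rw [← this]; push_cast; ring
    rw [← this]
    exact isUnit_padic_cast p _ hNm
  have hug2 : IsUnit (∑ i ∈ Finset.range m, (L ^ p ^ r) ^ i) := by
    rw [PowerSeries.isUnit_iff_constantCoeff, map_sum]
    simp only [map_pow, hcL, one_pow, Finset.sum_const, Finset.card_range, nsmul_eq_mul,
      mul_one]
    have : (((m : ℤ)) : ℤ_[p]) = ((m : ℕ) : ℤ_[p]) := by push_cast; ring
    rw [← this]
    exact isUnit_padic_cast p _ (by exact_mod_cast fun h => hpm (Int.ofNat_dvd.mp h))
  have huLi : IsUnit Li := IsUnit.of_mul_eq_one (a := Li) L (by rw [mul_comm]; exact hLi)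
  have huw : IsUnit (-(Li ^ N) * (∑ i ∈ Finset.range m, (L ^ p ^ r) ^ i)
      * (∑ i ∈ Finset.range (N - 1), L ^ i)) :=
    (((huLi.pow N).neg.mul hug2).mul hug1)
  refine ⟨huw.unit, ?_⟩
  rw [huw.unit_spec, key, hfac1, hfac2, ← hlam]
  ring

/-- Let `p` be prime, `N ≥ 2` with `p ∤ (N-1)` and `v_p(N+1) = r ≥ 1`.  Let `λ = 1 + T`,
a unit of `ℤ_p⟦T⟧`.  Then `λ + λ⁻¹ - λ^N - λ^(-N)` is an associate of
`T * ((1+T)^(p^r) - 1)` in `ℤ_p⟦T⟧`. -/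
theorem stmt_9 (p : ℕ) [Fact p.Prime] (N r : ℕ) (hN : 2 ≤ N)
    (hNm : ¬ (p : ℤ) ∣ (N - 1 : ℤ)) (hr : 1 ≤ r) (hval : padicValNat p (N + 1) = r)
    (lam : (PowerSeries ℤ_[p])ˣ) (hlam : (lam : PowerSeries ℤ_[p]) = 1 + PowerSeries.X) :
    ∃ w : (PowerSeries ℤ_[p])ˣ,
      (lam : PowerSeries ℤ_[p]) + ((lam⁻¹ : (PowerSeries ℤ_[p])ˣ) : PowerSeries ℤ_[p])
          - ((lam ^ N : (PowerSeries ℤ_[p])ˣ) : PowerSeries ℤ_[p])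
          - (((lam ^ N)⁻¹ : (PowerSeries ℤ_[p])ˣ) : PowerSeries ℤ_[p])
        = (w : PowerSeries ℤ_[p])
            * (PowerSeries.X * ((1 + PowerSeries.X) ^ (p ^ r) - 1)) := by
  have hdvd : p ^ r ∣ N + 1 := by rw [← hval]; exact pow_padicValNat_dvd
  obtain ⟨m, hm⟩ := hdvd
  have hpm : ¬ p ∣ m := by
    intro hpm
    have hd : p ^ (r + 1) ∣ N + 1 := by
      obtain ⟨t, ht⟩ := hpm
      exact ⟨t, by rw [hm, ht]; ring⟩
    exact pow_succ_padicValNat_not_dvd (by omega : N + 1 ≠ 0) (by rwa [hval])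
  have hcoeN : (((lam ^ N)⁻¹ : (PowerSeries ℤ_[p])ˣ) : PowerSeries ℤ_[p])
      = ((lam⁻¹ : (PowerSeries ℤ_[p])ˣ) : PowerSeries ℤ_[p]) ^ N := by
    rw [← inv_pow, Units.val_pow_eq_pow_val]
  have hcoeNN : ((lam ^ N : (PowerSeries ℤ_[p])ˣ) : PowerSeries ℤ_[p])
      = ((lam : PowerSeries ℤ_[p])) ^ N := by
    rw [Units.val_pow_eq_pow_val]
  rw [hcoeN, hcoeNN]
  exact stmt_9_aux p N r m hN hNm hm hpm _ _
    (by rw [← Units.val_mul, mul_inv_cancel, Units.val_one]) hlam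
end

section
/- Let $p$ be a prime and $r \ge 1$. Let $A = \mathbb{Z}_p\llbracket T \rrbracket / \big(T\,((1+T)^{p^r}-1)\big)$ and let $q : A \twoheadrightarrow \mathbb{Z}_p\llbracket T \rrbracket / \big((1+T)^{p^r}-1\big)$ be the natural quotient map. Let $u \in A$ be the image of $T^2(1+T)^{-1}$. Then the restriction of $q$ to the $\mathbb{Z}_p$-subalgebra of $A$ generated by $u$ is injective. -/
open PowerSeries

private lemma coeff_one_one_add_X_pow (R : Type*) [CommRing R] (n : ℕ) :
    (PowerSeries.coeff 1) ((1 + X : PowerSeries R) ^ n) = n := by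
  induction n with
  | zero => simp
  | succ n ih =>
    rw [pow_succ, mul_add, mul_one, map_add, ih, coeff_succ_mul_X]
    simp

set_option maxHeartbeats 1000000 in
/-- Let `A = ℤ_p⟦T⟧/(T((1+T)^(p^r)-1))`, let `q : A → ℤ_p⟦T⟧/((1+T)^(p^r)-1)` be the
natural quotient map, and let `u ∈ A` be the image of `T²(1+T)⁻¹`.  Then `q` is
injective on the `ℤ_p`-subalgebra of `A` generated by `u`. -/
theorem stmt_10 (p : ℕ) [Fact p.Prime] (r : ℕ) (hr : 1 ≤ r) :
    Set.InjOn
      (Ideal.Quotient.factor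
        (S := Ideal.span {PowerSeries.X *
          ((1 + PowerSeries.X : PowerSeries ℤ_[p]) ^ (p ^ r) - 1)})
        (T := Ideal.span {(1 + PowerSeries.X : PowerSeries ℤ_[p]) ^ (p ^ r) - 1})
        (Ideal.span_singleton_le_span_singleton.mpr (dvd_mul_left _ PowerSeries.X)))
      (↑(Algebra.adjoin ℤ_[p]
        {(Ideal.Quotient.mk
            (Ideal.span {PowerSeries.X *
              ((1 + PowerSeries.X : PowerSeries ℤ_[p]) ^ (p ^ r) - 1)}))
          (PowerSeries.X ^ 2 * Ring.inverse (1 + PowerSeries.X))}) : Set _) := by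
  set f : PowerSeries ℤ_[p] := (1 + X) ^ (p ^ r) - 1 with hf
  set v : PowerSeries ℤ_[p] := X ^ 2 * Ring.inverse (1 + X) with hv
  intro a ha b hb hab
  have hd : a - b ∈ Algebra.adjoin ℤ_[p]
      {(Ideal.Quotient.mk (Ideal.span {X * f})) v} := sub_mem ha hb
  rw [Algebra.adjoin_singleton_eq_range_aeval] at hd
  obtain ⟨P, hP⟩ := hd
  set w : PowerSeries ℤ_[p] := Polynomial.aeval v P with hw
  have hP' : a - b = (Ideal.Quotient.mk (Ideal.span {X * f})) w := by
    rw [← hP]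
    show Polynomial.aeval ((Ideal.Quotient.mkₐ ℤ_[p] (Ideal.span {X * f})) v) P = _
    rw [Polynomial.aeval_algHom_apply]
    rfl
  -- w is divisible by f
  have hq0 : (Ideal.Quotient.mk (Ideal.span {f})) w = 0 := by
    have h0 : Ideal.Quotient.factor
        (Ideal.span_singleton_le_span_singleton.mpr (dvd_mul_left f X)) (a - b) = 0 := by
      rw [RingHom.map_sub, hab, sub_self]
    rwa [hP', Ideal.Quotient.factor_mk] at h0
  rw [Ideal.Quotient.eq_zero_iff_mem, Ideal.mem_span_singleton] at hq0
  obtain ⟨h, hh⟩ := hq0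
  -- constant coefficient facts
  have hf0 : constantCoeff (R := ℤ_[p]) f = 0 := by simp [hf]
  have hw0 : constantCoeff (R := ℤ_[p]) w = 0 := by rw [hh, map_mul, hf0, zero_mul]
  have hv0 : constantCoeff (R := ℤ_[p]) v = 0 := by simp [hv]
  have hP0 : P.coeff 0 = 0 := by
    have h1 : (constantCoeff (R := ℤ_[p])) w
        = Polynomial.eval₂ (RingHom.id ℤ_[p]) ((constantCoeff (R := ℤ_[p])) v) P := by
      rw [hw, Polynomial.aeval_def, Polynomial.hom_eval₂]
      congr 1
    rw [h1, hv0, Polynomial.eval₂_at_zero] at hw0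
    simpa using hw0
  -- hence X^2 divides w
  have hXP : Polynomial.X ∣ P := Polynomial.X_dvd_iff.mpr hP0
  obtain ⟨Q, hQ⟩ := hXP
  have hX2w : (X : PowerSeries ℤ_[p]) ^ 2 ∣ w := by
    rw [hw, hQ, map_mul, Polynomial.aeval_X]
    exact Dvd.dvd.mul_right (dvd_mul_right _ _) _
  have hw1 : (coeff 1) w = 0 := by
    rw [X_pow_dvd_iff] at hX2w
    exact hX2w 1 one_lt_two
  -- coefficient 1 of f * h
  have hf1 : (coeff 1) f = (p ^ r : ℕ) := by
    rw [hf, map_sub, coeff_one_one_add_X_pow]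
    simp
  have hcoeff : (coeff 1) (f * h)
      = (constantCoeff (R := ℤ_[p])) f * (coeff 1) h
        + (coeff 1) f * (constantCoeff (R := ℤ_[p])) h := by
    rw [coeff_mul, Finset.Nat.antidiagonal_succ, Finset.sum_cons, Finset.sum_map]
    simp [coeff_zero_eq_constantCoeff]
  rw [← hh, hw1, hf0, zero_mul, zero_add, hf1] at hcoeff
  have hpr : ((p ^ r : ℕ) : ℤ_[p]) ≠ 0 :=
    Nat.cast_ne_zero.mpr (pow_ne_zero r (Fact.out : p.Prime).pos.ne')
  have hh0 : (constantCoeff (R := ℤ_[p])) h = 0 := by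
    rcases mul_eq_zero.mp hcoeff.symm with h' | h'
    · exact absurd h' hpr
    · exact h'
  obtain ⟨h', hh'⟩ := X_dvd_iff.mpr hh0
  have hwI : w ∈ Ideal.span {X * f} := by
    rw [Ideal.mem_span_singleton]
    exact ⟨h', by rw [hh, hh']; ring⟩
  have hz : a - b = 0 := by
    rw [hP', Ideal.Quotient.eq_zero_iff_mem]
    exact hwI
  exact sub_eq_zero.mp hz
end

section
/- Let $p$ be a prime and let $g \in \mathbb{Z}_p[X]$ be a polynomial with $g(0) \ne 0$. Let $R = \mathbb{Z}_p[X]/(X\,g(X))$ and let $J \subseteq R$ be the ideal generated by the image of $X$ (equivalently, the kernel of the $\mathbb{Z}_p$-algebra map $R \to \mathbb{Z}_p$ sending $X$ to $0$). Then $J/J^2$ is isomorphic to $\mathbb{Z}_p/(g(0))$ as a $\mathbb{Z}_p$-module. -/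
set_option synthInstance.maxHeartbeats 400000
set_option maxHeartbeats 1000000

open Polynomial

private lemma stmt_13_aux2 {R M : Type*} [CommRing R] [AddCommGroup M] [Module R M]
    (f : R →ₗ[R] M) (h : Function.Surjective f) (s : Ideal R)
    (hker : LinearMap.ker f = s) : Nonempty (M ≃ₗ[R] R ⧸ s) := by
  refine ⟨?_⟩
  rw [← hker]
  exact (f.quotKerEquivOfSurjective h).symm

lemma stmt_13_aux {p : ℕ} [Fact p.Prime] (g : Polynomial ℤ_[p]) :
    Nonempty ((Ideal.span {Ideal.Quotient.mk (Ideal.span {Polynomial.X * g}) Polynomial.X}).Cotangent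
      ≃ₗ[ℤ_[p]] (ℤ_[p] ⧸ Ideal.span {g.eval 0})) := by
  classical
  set I : Ideal (Polynomial ℤ_[p]) := Ideal.span {Polynomial.X * g} with hI
  set mk := Ideal.Quotient.mk I with hmk
  set J : Ideal (Polynomial ℤ_[p] ⧸ I) := Ideal.span {mk X} with hJ
  have hXmem : mk X ∈ J := Ideal.subset_span rfl
  have hmem : ∀ a : ℤ_[p], mk (C a * X) ∈ J := by
    intro a; rw [map_mul]; exact J.mul_mem_left _ hXmem
  set f : ℤ_[p] →ₗ[ℤ_[p]] J.Cotangent :=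
    LinearMap.toSpanSingleton ℤ_[p] J.Cotangent (J.toCotangent ⟨mk X, hXmem⟩) with hf
  have halg : ∀ a : ℤ_[p], (algebraMap ℤ_[p] (Polynomial ℤ_[p] ⧸ I)) a = mk (C a) := by
    intro a
    rw [IsScalarTower.algebraMap_apply ℤ_[p] (Polynomial ℤ_[p]) (Polynomial ℤ_[p] ⧸ I) a]
    simp [Polynomial.algebraMap_eq]
    rfl
  have hfa : ∀ a : ℤ_[p], f a = J.toCotangent ⟨mk (C a * X), hmem a⟩ := by
    intro a
    rw [hf]
    simp only [LinearMap.toSpanSingleton_apply]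
    rw [← algebraMap_smul (Polynomial ℤ_[p] ⧸ I) a, ← map_smul]
    refine congrArg _ (Subtype.ext ?_)
    show (algebraMap ℤ_[p] (Polynomial ℤ_[p] ⧸ I) a) • (mk X) = mk (C a * X)
    rw [smul_eq_mul, halg, ← map_mul]
  have hJ2 : J ^ 2 = Ideal.span {mk X ^ 2} := by
    rw [hJ, Ideal.span_singleton_pow]
  -- kernel characterization
  have key : ∀ a : ℤ_[p], f a = 0 ↔ a ∈ Ideal.span {g.eval 0} := by
    intro a
    rw [hfa, Ideal.toCotangent_eq_zero]
    show mk (C a * X) ∈ J ^ 2 ↔ _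
    simp only [hJ2, Ideal.mem_span_singleton]
    constructor
    · rintro ⟨r, hr⟩
      obtain ⟨h, rfl⟩ := Ideal.Quotient.mk_surjective r
      have hImem : C a * X - X ^ 2 * h ∈ I := by
        rw [← Ideal.Quotient.eq_zero_iff_mem, map_sub, hr, map_mul, map_pow]
        ring
      rw [hI, Ideal.mem_span_singleton] at hImem
      obtain ⟨q, hq⟩ := hImem
      have hX : (X : Polynomial ℤ_[p]) ≠ 0 := Polynomial.X_ne_zero
      have hca : C a = X * h + g * q := by
        apply mul_left_cancel₀ hX
        have h2 := sub_eq_iff_eq_add.mp hq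
        calc X * C a = C a * X := mul_comm _ _
          _ = X * g * q + X ^ 2 * h := h2
          _ = X * (X * h + g * q) := by ring
      have h3 := congrArg (Polynomial.eval 0) hca
      simp only [Polynomial.eval_C, Polynomial.eval_add, Polynomial.eval_mul,
        Polynomial.eval_X, Polynomial.eval_pow, zero_mul, zero_add] at h3
      exact ⟨q.eval 0, h3⟩
    · rintro ⟨c, rfl⟩
      have hXdvd : (X : Polynomial ℤ_[p]) ∣ g - C (g.eval 0) := by
        rw [Polynomial.X_dvd_iff]
        simp [Polynomial.coeff_zero_eq_eval_zero]
      obtain ⟨g₁, hg₁⟩ := hXdvd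
      refine ⟨mk (-(g₁ * C c)), ?_⟩
      have heq : C (g.eval 0 * c) * X - X ^ 2 * (-(g₁ * C c)) = X * g * (C c) := by
        have hc : C (g.eval 0) = g - X * g₁ := by rw [← hg₁]; ring
        rw [map_mul, hc]; ring
      rw [← map_pow, ← map_mul, Ideal.Quotient.mk_eq_mk_iff_sub_mem, heq]
      exact Ideal.mul_mem_right _ _ (Ideal.subset_span rfl)
  -- surjectivity
  have hsurj : Function.Surjective f := by
    intro y
    obtain ⟨⟨r, hr⟩, rfl⟩ := J.toCotangent_surjective y
    rw [hJ, Ideal.mem_span_singleton] at hr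
    obtain ⟨s, hs⟩ := hr
    obtain ⟨h, rfl⟩ := Ideal.Quotient.mk_surjective s
    refine ⟨h.eval 0, ?_⟩
    rw [hfa, Ideal.toCotangent_eq]
    show mk (C (h.eval 0) * X) - r ∈ J ^ 2
    rw [hJ2, hs, Ideal.mem_span_singleton]
    have hXdvd : (X : Polynomial ℤ_[p]) ∣ h - C (h.eval 0) := by
      rw [Polynomial.X_dvd_iff]
      simp [Polynomial.coeff_zero_eq_eval_zero]
    obtain ⟨h₁, hh₁⟩ := hXdvd
    refine ⟨mk (-h₁), ?_⟩
    have heq : C (h.eval 0) * X - X * h = X ^ 2 * (-h₁) := by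
      have h2 : X * (h - C (h.eval 0)) = X * (X * h₁) := by rw [hh₁]
      calc C (h.eval 0) * X - X * h = -(X * (h - C (h.eval 0))) := by ring
        _ = -(X * (X * h₁)) := by rw [h2]
        _ = X ^ 2 * (-h₁) := by ring
    rw [← map_mul, ← map_sub, ← map_pow, ← map_mul, heq]
  have hker : LinearMap.ker f = Ideal.span {g.eval 0} := by
    ext a
    rw [LinearMap.mem_ker, key]
  exact stmt_13_aux2 f hsurj _ hker

/-- Let `g ∈ ℤ_p[X]` with `g(0) ≠ 0`, let `R = ℤ_p[X]/(X·g(X))` and let `J ⊆ R` be the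
ideal generated by the image of `X` (equivalently, the kernel of the `ℤ_p`-algebra map
`R → ℤ_p` sending `X` to `0`).  Then `J/J²` is isomorphic to `ℤ_p/(g(0))` as a
`ℤ_p`-module. -/
theorem stmt_13 (p : ℕ) [Fact p.Prime] (g : Polynomial ℤ_[p])
    (hg : g.eval 0 ≠ 0)
    (J : Ideal (Polynomial ℤ_[p] ⧸ Ideal.span {Polynomial.X * g}))
    (hJ : J = Ideal.span
      {Ideal.Quotient.mk (Ideal.span {Polynomial.X * g}) Polynomial.X}) :
    Nonempty (J.Cotangent ≃ₗ[ℤ_[p]] (ℤ_[p] ⧸ Ideal.span {g.eval 0})) := by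
  subst hJ
  exact stmt_13_aux g
end

section
/- Let $p \ge 5$ be a prime. Let $\Delta$ be a cyclic group of order $p$, let $\Lambda = \mathbb{Z}_p[\Delta]$ be the group algebra, let $\iota$ be the ring automorphism of $\Lambda$ induced by $g \mapsto g^{-1}$ on $\Delta$, and let $\Lambda^+$ be the subring of $\Lambda$ fixed by $\iota$. Then $\Lambda^+$ has exactly two minimal prime ideals $\mathfrak{p}_1, \mathfrak{p}_2$; the quotient $\Lambda^+/\mathfrak{p}_1$ is isomorphic as a ring to $\mathbb{Z}_p$, and the quotient $\Lambda^+/\mathfrak{p}_2$ is isomorphic as a ring to $\mathbb{Z}_p[\zeta_p + \zeta_p^{-1}]$, the $\mathbb{Z}_p$-subalgebra generated by $\zeta_p + \zeta_p^{-1}$ inside an algebraic closure of $\mathbb{Q}_p$, where $\zeta_p$ is a primitive $p$-th root of unity. -/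
open Polynomial Finset MonoidAlgebra

noncomputable def zmodPow {M : Type*} [Monoid M] (p : ℕ) [NeZero p] (ζ : M) (h : ζ ^ p = 1) :
    Multiplicative (ZMod p) →* M where
  toFun z := ζ ^ (Multiplicative.toAdd z).val
  map_one' := by simp
  map_mul' x y := by
    have hmod : ∀ n : ℕ, ζ ^ (n % p) = ζ ^ n := by
      intro n
      conv_rhs => rw [← Nat.div_add_mod n p]
      rw [pow_add, pow_mul, h, one_pow, one_mul]
    show ζ ^ (Multiplicative.toAdd (x * y)).val
      = ζ ^ (Multiplicative.toAdd x).val * ζ ^ (Multiplicative.toAdd y).val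
    have h2 : Multiplicative.toAdd (x * y) = Multiplicative.toAdd x + Multiplicative.toAdd y := rfl
    rw [h2, ZMod.val_add, hmod, pow_add]

lemma cyclo_irred (p : ℕ) [hp : Fact p.Prime] :
    Irreducible (cyclotomic p ℚ_[p]) := by
  have hpprime := hp.out
  set Qz : ℤ[X] := (cyclotomic p ℤ).comp (X + 1) with hQz
  have hEz : Qz.IsEisensteinAt (Ideal.span {(p : ℤ)}) :=
    cyclotomic_comp_X_add_one_isEisensteinAt p
  set Qp : ℤ_[p][X] := (cyclotomic p ℤ_[p]).comp (X + 1) with hQp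
  have hmapz : Qz.map (Int.castRingHom ℤ_[p]) = Qp := by
    rw [hQz, Polynomial.map_comp, map_cyclotomic]
    simp
    rfl
  have hmonicp : Qp.Monic := (cyclotomic.monic p ℤ_[p]).comp_X_add_C 1
  have hdeg : Qp.natDegree = p - 1 := by
    rw [hQp, natDegree_comp, natDegree_cyclotomic, Nat.totient_prime hpprime]
    have : ((X : ℤ_[p][X]) + 1).natDegree = 1 := by
      rw [← C_1, natDegree_X_add_C]
    rw [this, mul_one]
  have hdegz : Qz.natDegree = p - 1 := by
    rw [hQz, natDegree_comp, natDegree_cyclotomic, Nat.totient_prime hpprime]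
    have : ((X : ℤ[X]) + 1).natDegree = 1 := by
      rw [← C_1, natDegree_X_add_C]
    rw [this, mul_one]
  have hnotunit : ¬ IsUnit (p : ℤ_[p]) := PadicInt.prime_p.not_unit
  have hEp : Qp.IsEisensteinAt (Ideal.span {(p : ℤ_[p])}) := by
    refine hmonicp.isEisensteinAt_of_mem_of_notMem ?_ ?_ ?_
    · rw [Ne, Ideal.span_singleton_eq_top]
      exact hnotunit
    · intro n hn
      rw [← hmapz, Polynomial.coeff_map]
      have := hEz.mem (n := n) (by rwa [hdegz, ← hdeg])
      rw [Ideal.mem_span_singleton] at this ⊢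
      obtain ⟨c, hc⟩ := this
      exact ⟨(c : ℤ_[p]), by rw [hc, map_mul]; simp⟩
    · have h0 : Qp.coeff 0 = (p : ℤ_[p]) := by
        rw [coeff_zero_eq_eval_zero, hQp, eval_comp]
        simp [eval_one_cyclotomic_prime]
      rw [h0, Ideal.span_singleton_pow, Ideal.mem_span_singleton]
      intro hdvd
      obtain ⟨c, hc⟩ := hdvd
      apply hnotunit
      have hpne : (p : ℤ_[p]) ≠ 0 := Nat.cast_ne_zero.2 hpprime.pos.ne'
      have h2 : (p : ℤ_[p]) * 1 = (p : ℤ_[p]) * ((p : ℤ_[p]) * c) := by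
        rw [mul_one]; linear_combination hc
      have := mul_left_cancel₀ hpne h2
      exact IsUnit.of_mul_eq_one _ this.symm
  have hirrp : Irreducible Qp := by
    refine hEp.irreducible (Ideal.span_singleton_prime ?_ |>.2 PadicInt.prime_p)
      hmonicp.isPrimitive ?_
    · exact Nat.cast_ne_zero.2 hpprime.pos.ne'
    · have := hpprime.two_le
      rw [hdeg]; omega
  have hirrq : Irreducible (Qp.map (algebraMap ℤ_[p] ℚ_[p])) :=
    (hmonicp.irreducible_iff_irreducible_map_fraction_map).1 hirrp
  have hmapq : Qp.map (algebraMap ℤ_[p] ℚ_[p]) = (cyclotomic p ℚ_[p]).comp (X + 1) := by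
    rw [hQp, Polynomial.map_comp, map_cyclotomic]
    simp
  rw [hmapq] at hirrq
  have e1 : (algEquivAevalXAddC (1 : ℚ_[p])) (cyclotomic p ℚ_[p])
      = (cyclotomic p ℚ_[p]).comp (X + 1) := by
    rw [algEquivAevalXAddC_apply, ← comp_eq_aeval, C_1]
  exact (MulEquiv.irreducible_iff (algEquivAevalXAddC (1 : ℚ_[p]))
    (x := cyclotomic p ℚ_[p])).1 (e1 ▸ hirrq)

lemma minpoly_zeta (p : ℕ) [hp : Fact p.Prime] (ζ : AlgebraicClosure ℚ_[p])
    (hζ : orderOf ζ = p) : minpoly ℚ_[p] ζ = cyclotomic p ℚ_[p] := by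
  have hppos : 0 < p := hp.out.pos
  have hprim : IsPrimitiveRoot ζ p := by
    have := IsPrimitiveRoot.orderOf ζ
    rwa [hζ] at this
  have hroot : aeval ζ (cyclotomic p ℚ_[p]) = 0 := by
    rw [aeval_def, ← eval_map, map_cyclotomic]
    exact (hprim.isRoot_cyclotomic hppos)
  exact (minpoly.eq_of_irreducible_of_monic (cyclo_irred p) hroot
    (cyclotomic.monic p ℚ_[p])).symm

lemma poly_zero (p : ℕ) [hp : Fact p.Prime] (ζ : AlgebraicClosure ℚ_[p])
    (hζ : orderOf ζ = p) (P : ℤ_[p][X]) (hdeg : P.natDegree < p)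
    (h1 : P.eval 1 = 0)
    (h2 : aeval ζ (P.map (algebraMap ℤ_[p] ℚ_[p])) = 0) : P = 0 := by
  have hppos : 0 < p := hp.out.pos
  set P' : ℚ_[p][X] := P.map (algebraMap ℤ_[p] ℚ_[p]) with hP'
  by_contra hne
  have hP'ne : P' ≠ 0 := fun h => hne (Polynomial.map_injective _
    (IsFractionRing.injective ℤ_[p] ℚ_[p]) (by simpa using h))
  have hd1 : (X - C (1 : ℚ_[p])) ∣ P' := by
    rw [dvd_iff_isRoot, IsRoot.def]
    rw [hP', eval_map]
    rw [eval₂_at_one]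
    simp [h1]
  have hint : IsIntegral ℚ_[p] ζ := by
    refine ⟨X ^ p - 1, monic_X_pow_sub_C _ hppos.ne', ?_⟩
    simp [← hζ, pow_orderOf_eq_one]
  have hd2 : cyclotomic p ℚ_[p] ∣ P' := by
    rw [← minpoly_zeta p ζ hζ]
    exact minpoly.dvd _ _ h2
  have hcop : IsCoprime (X - C (1 : ℚ_[p])) (cyclotomic p ℚ_[p]) := by
    apply isCoprime_of_irreducible_dvd
    · rintro ⟨h, -⟩
      exact X_sub_C_ne_zero 1 h
    · intro z hz hz1 hz2
      have hassoc : Associated z (X - C (1 : ℚ_[p])) :=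
        hz.associated_of_dvd (irreducible_X_sub_C 1) hz1
      have : (X - C (1 : ℚ_[p])) ∣ cyclotomic p ℚ_[p] := hassoc.symm.dvd.trans hz2
      obtain ⟨q, hq⟩ := this
      have h1 : (cyclotomic p ℚ_[p]).eval 1 = 0 := by
        rw [hq]; simp
      rw [eval_one_cyclotomic_prime] at h1
      exact hp.out.pos.ne' (by exact_mod_cast h1)
  have hd : (X - C (1 : ℚ_[p])) * cyclotomic p ℚ_[p] ∣ P' := hcop.mul_dvd hd1 hd2
  have hdegP' : P'.natDegree < p := lt_of_le_of_lt (natDegree_map_le) hdeg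
  have hdegprod : ((X - C (1 : ℚ_[p])) * cyclotomic p ℚ_[p]).natDegree = p := by
    rw [natDegree_mul (X_sub_C_ne_zero 1) (cyclotomic_ne_zero p ℚ_[p]),
      natDegree_X_sub_C, natDegree_cyclotomic, Nat.totient_prime hp.out]
    omega
  have := natDegree_le_of_dvd hd hP'ne
  omega

set_option maxHeartbeats 1000000 in
set_option synthInstance.maxHeartbeats 400000 in
/-- Let `p ≥ 5` be prime, `Δ` a cyclic group of order `p`, `Λ = ℤ_p[Δ]`, `ι` the
inversion automorphism and `Λ⁺` its fixed subring.  Then `Λ⁺` has exactly two minimal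
primes `𝔭₁, 𝔭₂`, with `Λ⁺/𝔭₁ ≅ ℤ_p` and `Λ⁺/𝔭₂ ≅ ℤ_p[ζ_p + ζ_p⁻¹]`, the `ℤ_p`-subalgebra
of an algebraic closure of `ℚ_p` generated by `ζ_p + ζ_p⁻¹` for a primitive `p`-th root
of unity `ζ_p`. -/
theorem stmt_16 (p : ℕ) [Fact p.Prime] (hp5 : 5 ≤ p)
    (Δ : Type) [CommGroup Δ] [Fintype Δ] [IsCyclic Δ] (hcard : Fintype.card Δ = p)
    (ζ : AlgebraicClosure ℚ_[p]) (hζ : orderOf ζ = p) :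
    ∃ p1 p2 : Ideal (AlgHom.equalizer
        (MonoidAlgebra.domCongr ℤ_[p] ℤ_[p] (MulEquiv.inv Δ)).toAlgHom
        (AlgHom.id ℤ_[p] (MonoidAlgebra ℤ_[p] Δ))),
      p1 ≠ p2
      ∧ minimalPrimes (AlgHom.equalizer
          (MonoidAlgebra.domCongr ℤ_[p] ℤ_[p] (MulEquiv.inv Δ)).toAlgHom
          (AlgHom.id ℤ_[p] (MonoidAlgebra ℤ_[p] Δ))) = {p1, p2}
      ∧ Nonempty ((_ ⧸ p1) ≃+* ℤ_[p])
      ∧ Nonempty ((_ ⧸ p2) ≃+*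
          (Subring.closure
            (Set.range ((algebraMap ℚ_[p] (AlgebraicClosure ℚ_[p])).comp
              (algebraMap ℤ_[p] ℚ_[p])) ∪ {ζ + ζ⁻¹}))) := by
  classical
  have hpprime : p.Prime := Fact.out
  haveI : NeZero p := ⟨hpprime.pos.ne'⟩
  set f : ℤ_[p] →+* AlgebraicClosure ℚ_[p] :=
    (algebraMap ℚ_[p] (AlgebraicClosure ℚ_[p])).comp (algebraMap ℤ_[p] ℚ_[p]) with hf
  set S : Subring (AlgebraicClosure ℚ_[p]) := Subring.closure (Set.range f ∪ {ζ + ζ⁻¹}) with hS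
  set ι := (MonoidAlgebra.domCongr ℤ_[p] ℤ_[p] (MulEquiv.inv Δ)).toAlgHom with hι
  set Req := AlgHom.equalizer ι (AlgHom.id ℤ_[p] (MonoidAlgebra ℤ_[p] Δ)) with hReq
  -- basic facts about ζ
  have hζ1 : ζ ^ p = 1 := by
    rw [← orderOf_dvd_iff_pow_eq_one, hζ]
  have hζne1 : ζ ≠ 1 := by
    intro h
    rw [h, orderOf_one] at hζ
    omega
  have hζne0 : ζ ≠ 0 := by
    intro h
    rw [h, zero_pow hpprime.pos.ne'] at hζ1
    exact zero_ne_one hζ1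
  -- the group isomorphism and character
  have hcard' : Nat.card (Multiplicative (ZMod p)) = Nat.card Δ := by
    simp [Nat.card_eq_fintype_card, hcard, ZMod.card]
  set d : Multiplicative (ZMod p) ≃* Δ := mulEquivOfCyclicCardEq hcard' with hd
  set mh : Δ →* AlgebraicClosure ℚ_[p] := (zmodPow p ζ hζ1).comp d.symm.toMonoidHom with hmh0
  have hmh_apply : ∀ g : Δ, mh g = ζ ^ (Multiplicative.toAdd (d.symm g)).val := fun g => rfl
  set g₀ : Δ := d (Multiplicative.ofAdd 1) with hg₀
  have hmhg₀ : mh g₀ = ζ := by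
    rw [hmh_apply, hg₀, MulEquiv.symm_apply_apply]
    show ζ ^ (1 : ZMod p).val = ζ
    rw [ZMod.val_one p, pow_one]
  have hmhinv : ∀ g : Δ, mh g⁻¹ = (mh g)⁻¹ := by
    intro g
    refine eq_inv_of_mul_eq_one_left ?_
    rw [← map_mul, inv_mul_cancel, map_one]
  -- the two ring homomorphisms
  set aug : MonoidAlgebra ℤ_[p] Δ →+* ℤ_[p] :=
    MonoidAlgebra.liftNCRingHom (RingHom.id ℤ_[p]) 1 (fun _ _ => Commute.all _ _) with haug
  set φ : MonoidAlgebra ℤ_[p] Δ →+* AlgebraicClosure ℚ_[p] :=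
    MonoidAlgebra.liftNCRingHom f mh (fun _ _ => Commute.all _ _) with hφ
  have haug_single : ∀ (g : Δ) (c : ℤ_[p]), aug (MonoidAlgebra.single g c) = c := by
    intro g c
    simp [haug, liftNCRingHom, liftNC_single]
  have hφ_single : ∀ (g : Δ) (c : ℤ_[p]), φ (MonoidAlgebra.single g c) = f c * mh g := by
    intro g c
    simp [hφ, liftNCRingHom, liftNC_single]
  have hι_single : ∀ (g : Δ) (c : ℤ_[p]),
      ι (MonoidAlgebra.single g c) = MonoidAlgebra.single g⁻¹ c := by
    intro g c
    simp [hι]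
  have hmem : ∀ x : MonoidAlgebra ℤ_[p] Δ, x ∈ Req ↔ ι x = x := by
    intro x
    rw [hReq]
    exact AlgHom.mem_equalizer ι (AlgHom.id ℤ_[p] (MonoidAlgebra ℤ_[p] Δ)) x
  -- key injectivity
  have hinj : ∀ x : MonoidAlgebra ℤ_[p] Δ, aug x = 0 → φ x = 0 → x = 0 := by
    intro x haugx hφx
    set e : ZMod p ≃ Δ := Multiplicative.ofAdd.trans d.toEquiv with he
    set a : ZMod p → ℤ_[p] := fun z => x.coeff (e z) with ha
    have hmhe : ∀ z : ZMod p, mh (e z) = ζ ^ z.val := by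
      intro z
      rw [hmh_apply]
      show ζ ^ (Multiplicative.toAdd (d.symm (d (Multiplicative.ofAdd z)))).val = ζ ^ z.val
      rw [MulEquiv.symm_apply_apply]
      simp
    have h1 : (∑ g : Δ, MonoidAlgebra.single g (x.coeff g)) = x := by
      rw [← Finsupp.sum_fintype]
      · exact MonoidAlgebra.sum_coeff_single x
      · intro g
        simp
    have hx : x = ∑ z : ZMod p, MonoidAlgebra.single (e z) (a z) := by
      rw [← h1]
      exact (Fintype.sum_equiv e _ _ (fun z => rfl)).symm
    have haug' : ∑ z : ZMod p, a z = 0 := by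
      rw [hx, map_sum] at haugx
      simpa [haug_single] using haugx
    have hφ' : ∑ z : ZMod p, f (a z) * ζ ^ z.val = 0 := by
      rw [hx, map_sum] at hφx
      rw [← hφx]
      exact Finset.sum_congr rfl fun z _ => by rw [hφ_single, hmhe]
    set P : ℤ_[p][X] := ∑ z : ZMod p, Polynomial.C (a z) * Polynomial.X ^ z.val with hP
    have hdeg : P.natDegree < p := by
      have hle : P.natDegree ≤ p - 1 := by
        apply Polynomial.natDegree_sum_le_of_forall_le
        intro z _
        refine le_trans (Polynomial.natDegree_C_mul_le _ _) ?_
        rw [Polynomial.natDegree_X_pow]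
        have := ZMod.val_lt z
        omega
      omega
    have heval : P.eval 1 = 0 := by
      rw [hP, Polynomial.eval_finset_sum]
      simpa using haug'
    have haeval : Polynomial.aeval ζ (P.map (algebraMap ℤ_[p] ℚ_[p])) = 0 := by
      rw [hP, Polynomial.map_sum, map_sum]
      rw [← hφ']
      refine Finset.sum_congr rfl fun z _ => ?_
      rw [Polynomial.map_mul, Polynomial.map_C, Polynomial.map_pow, Polynomial.map_X]
      rw [map_mul, Polynomial.aeval_C, map_pow, Polynomial.aeval_X]
      rw [hf]
      rfl
    have hP0 : P = 0 := poly_zero p ζ hζ P hdeg heval haeval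
    have hcoeff : ∀ z : ZMod p, P.coeff z.val = a z := by
      intro z
      rw [hP, Polynomial.finset_sum_coeff]
      rw [Finset.sum_eq_single z]
      · simp [Polynomial.coeff_C_mul, Polynomial.coeff_X_pow]
      · intro w _ hw
        rw [Polynomial.coeff_C_mul, Polynomial.coeff_X_pow, if_neg, mul_zero]
        intro h
        exact hw (ZMod.val_injective p h.symm)
      · intro h
        exact absurd (Finset.mem_univ z) h
    have ha0 : ∀ z : ZMod p, a z = 0 := by
      intro z
      rw [← hcoeff z, hP0, Polynomial.coeff_zero]
    rw [hx]
    exact Finset.sum_eq_zero fun z _ => by rw [ha0 z]; simp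
  -- key elements
  set σ : MonoidAlgebra ℤ_[p] Δ :=
    MonoidAlgebra.single g₀ (1:ℤ_[p]) + MonoidAlgebra.single g₀⁻¹ (1:ℤ_[p]) with hσ
  have hσmem : σ ∈ Req := by
    rw [hmem, hσ, map_add, hι_single, hι_single, inv_inv, add_comm]
  have haugσ : aug σ = 2 := by
    rw [hσ, map_add, haug_single, haug_single, one_add_one_eq_two]
  have hφσ : φ σ = ζ + ζ⁻¹ := by
    rw [hσ, map_add, hφ_single, hφ_single, hmhinv, hmhg₀, map_one, one_mul, one_mul]
  set N : MonoidAlgebra ℤ_[p] Δ := ∑ g : Δ, MonoidAlgebra.single g (1:ℤ_[p]) with hN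
  have hNmem : N ∈ Req := by
    rw [hmem, hN, map_sum]
    exact Fintype.sum_equiv (Equiv.inv Δ) _ _
      (fun g => by rw [hι_single]; simp)
  have haugN : aug N = p := by
    rw [hN, map_sum]
    simp [haug_single, hcard]
  have hφN : φ N = 0 := by
    have hT : φ N = ∑ g : Δ, mh g := by
      rw [hN, map_sum]
      exact Finset.sum_congr rfl fun g _ => by rw [hφ_single, map_one, one_mul]
    have hstep : ζ * (∑ g : Δ, mh g) = ∑ g : Δ, mh g := by
      rw [Finset.mul_sum]
      exact Fintype.sum_equiv (Equiv.mulLeft g₀) _ _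
        (fun g => by rw [show (Equiv.mulLeft g₀) g = g₀ * g from rfl, map_mul, hmhg₀])
    have : (ζ - 1) * (∑ g : Δ, mh g) = 0 := by
      rw [sub_mul, one_mul, hstep, sub_self]
    rcases mul_eq_zero.1 this with h | h
    · exact absurd (sub_eq_zero.1 h) hζne1
    · rw [hT, h]
  -- membership of image in S
  have hfm : ∀ c : ℤ_[p], f c ∈ S := fun c => Subring.subset_closure (Or.inl ⟨c, rfl⟩)
  have hζζ : ζ + ζ⁻¹ ∈ S := Subring.subset_closure (Or.inr rfl)
  have hpair : ∀ k : ℕ, ζ ^ k + (ζ ^ k)⁻¹ ∈ S := by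
    have key : ∀ k : ℕ, (ζ ^ k + (ζ ^ k)⁻¹ ∈ S) ∧ (ζ ^ (k+1) + (ζ ^ (k+1))⁻¹ ∈ S) := by
      intro k
      induction k with
      | zero =>
        constructor
        · simp only [pow_zero, inv_one]
          exact S.add_mem S.one_mem S.one_mem
        · rw [pow_one]
          exact hζζ
      | succ n ih =>
        refine ⟨ih.2, ?_⟩
        have hrec : ζ ^ (n+2) + (ζ ^ (n+2))⁻¹
            = (ζ + ζ⁻¹) * (ζ ^ (n+1) + (ζ ^ (n+1))⁻¹) - (ζ ^ n + (ζ ^ n)⁻¹) := by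
          field_simp
          ring
        rw [hrec]
        exact S.sub_mem (S.mul_mem hζζ ih.2) ih.1
    exact fun k => (key k).1
  have hmhpair : ∀ g : Δ, mh g + mh g⁻¹ ∈ S := by
    intro g
    rw [hmhinv, hmh_apply]
    exact hpair _
  have hsym : ∀ x : MonoidAlgebra ℤ_[p] Δ, φ x + φ (ι x) ∈ S := by
    intro x
    induction x using MonoidAlgebra.induction_linear with
    | zero => simpa using S.zero_mem
    | add a b ha hb =>
      rw [map_add, map_add, map_add]
      have : φ a + φ b + (φ (ι a) + φ (ι b)) = (φ a + φ (ι a)) + (φ b + φ (ι b)) := by ring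
      rw [this]
      exact S.add_mem ha hb
    | single g c =>
      rw [hι_single, hφ_single, hφ_single, ← mul_add]
      exact S.mul_mem (hfm c) (hmhpair g)
  have h2unit : IsUnit (2 : ℤ_[p]) := by
    by_contra h
    rw [PadicInt.not_isUnit_iff] at h
    have h2 : ((2:ℤ) : ℤ_[p]) = (2:ℤ_[p]) := by norm_cast
    rw [← h2, PadicInt.norm_int_lt_one_iff_dvd] at h
    have := Int.le_of_dvd (by norm_num) h
    omega
  have hhalf : ∀ y : AlgebraicClosure ℚ_[p], 2 * y ∈ S → y ∈ S := by
    intro y hy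
    obtain ⟨u, hu⟩ := h2unit
    have h1 : f ((u⁻¹ : ℤ_[p]ˣ) : ℤ_[p]) * 2 = 1 := by
      have : f ((u⁻¹ : ℤ_[p]ˣ) : ℤ_[p]) * f ((u : ℤ_[p]ˣ) : ℤ_[p]) = 1 := by
        rw [← map_mul]
        norm_num
      rw [hu] at this
      rwa [map_ofNat f 2] at this
    have : y = f ((u⁻¹ : ℤ_[p]ˣ) : ℤ_[p]) * (2 * y) := by
      rw [← mul_assoc, h1, one_mul]
    rw [this]
    exact S.mul_mem (hfm _) hy
  have himage : ∀ x : MonoidAlgebra ℤ_[p] Δ, x ∈ Req → φ x ∈ S := by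
    intro x hx
    apply hhalf
    have h2 : (2 : AlgebraicClosure ℚ_[p]) * φ x = φ x + φ (ι x) := by
      rw [(hmem x).1 hx]
      ring
    rw [h2]
    exact hsym x
  -- restricted homomorphisms
  set augR : ↥Req →+* ℤ_[p] := aug.comp (Subalgebra.val Req).toRingHom with haugR
  set φR : ↥Req →+* AlgebraicClosure ℚ_[p] := φ.comp (Subalgebra.val Req).toRingHom with hφR
  set p1 : Ideal ↥Req := RingHom.ker augR with hp1
  set p2 : Ideal ↥Req := RingHom.ker φR with hp2
  have hp1prime : p1.IsPrime := RingHom.ker_isPrime augR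
  have hp2prime : p2.IsPrime := RingHom.ker_isPrime φR
  -- surjectivity of augR
  have h1mem : ∀ c : ℤ_[p], MonoidAlgebra.single (1:Δ) c ∈ Req := by
    intro c
    rw [hmem, hι_single, inv_one]
  have haugsurj : Function.Surjective augR := by
    intro c
    exact ⟨⟨MonoidAlgebra.single (1:Δ) c, h1mem c⟩, haug_single 1 c⟩
  -- range of φR
  have hrange : φR.range = S := by
    apply le_antisymm
    · rintro - ⟨x, rfl⟩
      exact himage x.1 x.2
    · rw [hS]
      rw [Subring.closure_le]
      rintro y (⟨c, rfl⟩ | rfl)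
      · refine ⟨⟨MonoidAlgebra.single (1:Δ) c, h1mem c⟩, ?_⟩
        show φ (MonoidAlgebra.single (1:Δ) c) = f c
        rw [hφ_single, map_one, mul_one]
      · exact ⟨⟨σ, hσmem⟩, hφσ⟩
  -- the two ideals are incomparable
  set t : ↥Req := ⟨σ, hσmem⟩ - 2 with ht
  have htp1 : t ∈ p1 := by
    rw [hp1, RingHom.mem_ker, ht, map_sub, map_ofNat]
    show aug σ - 2 = 0
    rw [haugσ]
    ring
  have htnp2 : t ∉ p2 := by
    rw [hp2, RingHom.mem_ker, ht, map_sub, map_ofNat]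
    show ¬ (φ σ - 2 = 0)
    rw [hφσ]
    intro h
    have hsq : (ζ - 1)^2 = ζ * (ζ + ζ⁻¹ - 2) := by
      field_simp
      ring
    rw [h, mul_zero, sq_eq_zero_iff, sub_eq_zero] at hsq
    exact hζne1 hsq
  set n' : ↥Req := ⟨N, hNmem⟩ with hn'
  have hnp2 : n' ∈ p2 := by
    rw [hp2, RingHom.mem_ker]
    exact hφN
  have hnnp1 : n' ∉ p1 := by
    rw [hp1, RingHom.mem_ker]
    show ¬ (aug N = 0)
    rw [haugN]
    exact_mod_cast hpprime.pos.ne'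
  have hnle1 : ¬ p1 ≤ p2 := fun h => htnp2 (h htp1)
  have hnle2 : ¬ p2 ≤ p1 := fun h => hnnp1 (h hnp2)
  have hne : p1 ≠ p2 := fun h => hnle1 (le_of_eq h)
  -- intersection is zero
  have hinf : p1 ⊓ p2 = ⊥ := by
    apply le_antisymm _ bot_le
    intro y hy
    rw [Submodule.mem_inf] at hy
    obtain ⟨h1, h2⟩ := hy
    rw [hp1, RingHom.mem_ker] at h1
    rw [hp2, RingHom.mem_ker] at h2
    rw [Ideal.mem_bot]
    exact Subtype.ext (hinj y.1 h1 h2)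
  -- every prime contains p1 or p2
  have hcontain : ∀ q : Ideal ↥Req, q.IsPrime → p1 ≤ q ∨ p2 ≤ q := by
    intro q hq
    apply hq.mul_le.1
    calc p1 * p2 ≤ p1 ⊓ p2 := Ideal.mul_le_inf
    _ = ⊥ := hinf
    _ ≤ q := bot_le
  have hp1min : p1 ∈ minimalPrimes ↥Req := by
    refine ⟨⟨hp1prime, bot_le⟩, ?_⟩
    intro q hq hle
    rcases hcontain q hq.1 with h | h
    · exact h
    · exact absurd (h.trans hle) hnle2
  have hp2min : p2 ∈ minimalPrimes ↥Req := by
    refine ⟨⟨hp2prime, bot_le⟩, ?_⟩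
    intro q hq hle
    rcases hcontain q hq.1 with h | h
    · exact absurd (h.trans hle) hnle1
    · exact h
  have hminset : minimalPrimes ↥Req = {p1, p2} := by
    apply Set.eq_of_subset_of_subset
    · intro q hq
      rcases hcontain q hq.1.1 with h | h
      · left
        exact le_antisymm (hq.2 ⟨hp1prime, bot_le⟩ h) h
      · right
        exact le_antisymm (hq.2 ⟨hp2prime, bot_le⟩ h) h
    · rintro q (rfl | rfl)
      · exact hp1min
      · exact hp2min
  -- quotient isomorphisms
  have iso1 : (↥Req ⧸ p1) ≃+* ℤ_[p] := RingHom.quotientKerEquivOfSurjective haugsurj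
  have iso2 : (↥Req ⧸ p2) ≃+* S :=
    (RingHom.quotientKerEquivRange φR).trans (RingEquiv.subringCongr hrange)
  exact ⟨p1, p2, hne, hminset, ⟨iso1⟩, ⟨iso2⟩⟩
end
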